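/- arXiv:2508.15677 — 4 statements merged into one kernel-verified Lean document; each statement's English description precedes it below -/
import Mathlib

section
/- Let k ≥ 4 and let 2 ≤ n, n+2 ≤ m ≤ k−1. Let X be the graph obtained from the path v₁ — v₂ — ⋯ — v_k by adding one extra edge between v_n and v_m. Then the number of spanning 2-forests of X with one tree containing v₁ and the other containing v_k equals (k − m + n)(m − n + 1) − 1. -/
structure Multigraph where
  V : Type
  E : Type
  [fintypeV : Fintype V]
  [fintypeE : Fintype E]
  [decEqV : DecidableEq V]
  ends : E → Sym2 V

attribute [instance] Multigraph.fintypeV Multigraph.fintypeE Multigraph.decEqV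

namespace Multigraph

variable (G : Multigraph)

/-- Reachability in the spanning subgraph using only the edges in `S`. -/
def Reach (S : Set G.E) : G.V → G.V → Prop :=
  Relation.ReflTransGen (fun x y => ∃ e ∈ S, G.ends e = s(x, y))

/-- The multigraph is connected. -/
def Connected : Prop := ∀ x y : G.V, G.Reach Set.univ x y

/-- The edge set `S` is acyclic: every edge of `S` is a bridge of `S`. -/
def IsForest (S : Finset G.E) : Prop :=
  ∀ e ∈ S, ∀ x y : G.V, G.ends e = s(x, y) → ¬ G.Reach ((↑S : Set G.E) \ {e}) x y

/-- `S` is the edge set of a spanning tree. -/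
def IsSpanningTree (S : Finset G.E) : Prop :=
  G.IsForest S ∧ ∀ x y : G.V, G.Reach ↑S x y

/-- `S` is the edge set of a spanning 2-forest consisting of two trees, one
containing `u`, the other containing `v`, whose vertex sets partition the vertices. -/
def IsTwoForest (u v : G.V) (S : Finset G.E) : Prop :=
  G.IsForest S ∧ ¬ G.Reach ↑S u v ∧ ∀ x : G.V, G.Reach ↑S u x ∨ G.Reach ↑S v x

/-- The number of spanning trees. -/
noncomputable def treeCount : ℕ :=
  Nat.card {S : Finset G.E // G.IsSpanningTree S}

/-- The number of spanning 2-forests separating `u` and `v`. -/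
noncomputable def twoForestCount (u v : G.V) : ℕ :=
  Nat.card {S : Finset G.E // G.IsTwoForest u v S}

end Multigraph

/-- The path graph `v₁ — v₂ — ⋯ — v_k` (vertices encoded as `Fin k`, with `v_i`
corresponding to index `i - 1`) together with one extra edge between `v_n` and `v_m`. -/
def pathChord (k n m : ℕ) (hn : n - 1 < k) (hm : m - 1 < k) : Multigraph where
  V := Fin k
  E := Fin (k - 1) ⊕ Unit
  ends := fun e =>
    match e with
    | .inl i => s((⟨i.1, by have := i.isLt; omega⟩ : Fin k),
                  (⟨i.1 + 1, by have := i.isLt; omega⟩ : Fin k))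
    | .inr _ => s((⟨n - 1, hn⟩ : Fin k), (⟨m - 1, hm⟩ : Fin k))

namespace PCProof

def pc (k : ℕ) (S : Set (Fin (k-1) ⊕ Unit)) (p q : ℕ) : Prop :=
  ∀ i : ℕ, min p q ≤ i → i < max p q → ∃ h : i < k - 1, Sum.inl (⟨i, h⟩ : Fin (k-1)) ∈ S

def Conn (k a b : ℕ) (S : Set (Fin (k-1) ⊕ Unit)) (p q : ℕ) : Prop :=
  pc k S p q ∨ (Sum.inr () ∈ S ∧ ((pc k S p a ∧ pc k S b q) ∨ (pc k S p b ∧ pc k S a q)))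

variable {k a b : ℕ} {S : Set (Fin (k-1) ⊕ Unit)}

lemma pc_mem {p q j : ℕ} (h : pc k S p q)
    (h1 : min p q ≤ j) (h2 : j < max p q) {hj : j < k-1} :
    Sum.inl (⟨j, hj⟩ : Fin (k-1)) ∈ S := by
  obtain ⟨h', hm⟩ := h j h1 h2
  exact hm

lemma pc_self (p : ℕ) : pc k S p p := by
  intro i h1 h2; exfalso; omega

lemma pc_shrink {p q p' q' : ℕ} (h : pc k S p q) (h1 : min p q ≤ min p' q')
    (h2 : max p' q' ≤ max p q) : pc k S p' q' :=
  fun i hi1 hi2 => h i (by omega) (by omega)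

lemma pc_symm {p q : ℕ} (h : pc k S p q) : pc k S q p :=
  pc_shrink h (by omega) (by omega)

lemma pc_trans {p q r : ℕ} (h1 : pc k S p q) (h2 : pc k S q r) : pc k S p r := by
  intro i hi1 hi2
  by_cases hc : min p q ≤ i ∧ i < max p q
  · exact h1 i hc.1 hc.2
  · exact h2 i (by omega) (by omega)

lemma pc_single {j : ℕ} (hj : j < k-1) (hmem : Sum.inl (⟨j, hj⟩ : Fin (k-1)) ∈ S) :
    pc k S j (j+1) := by
  intro i h1 h2
  have : i = j := by omega
  subst this
  exact ⟨hj, hmem⟩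

lemma conn_symm {p q : ℕ} (h : Conn k a b S p q) : Conn k a b S q p := by
  rcases h with h | ⟨hc, ⟨h1, h2⟩ | ⟨h1, h2⟩⟩
  · exact Or.inl (pc_symm h)
  · exact Or.inr ⟨hc, Or.inr ⟨pc_symm h2, pc_symm h1⟩⟩
  · exact Or.inr ⟨hc, Or.inl ⟨pc_symm h2, pc_symm h1⟩⟩

lemma conn_pc_trans {p q r : ℕ} (h : Conn k a b S p q) (h' : pc k S q r) :
    Conn k a b S p r := by
  rcases h with h | ⟨hc, ⟨h1, h2⟩ | ⟨h1, h2⟩⟩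
  · exact Or.inl (pc_trans h h')
  · exact Or.inr ⟨hc, Or.inl ⟨h1, pc_trans h2 h'⟩⟩
  · exact Or.inr ⟨hc, Or.inr ⟨h1, pc_trans h2 h'⟩⟩

lemma conn_chordR {p : ℕ} (h : Conn k a b S p a) (hc : Sum.inr () ∈ S) :
    Conn k a b S p b := by
  rcases h with h | ⟨_, ⟨h1, h2⟩ | ⟨h1, h2⟩⟩
  · exact Or.inr ⟨hc, Or.inl ⟨h, pc_self b⟩⟩
  · exact Or.inr ⟨hc, Or.inl ⟨h1, pc_self b⟩⟩
  · exact Or.inl h1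

lemma conn_chordL {p : ℕ} (h : Conn k a b S p b) (hc : Sum.inr () ∈ S) :
    Conn k a b S p a := by
  rcases h with h | ⟨_, ⟨h1, h2⟩ | ⟨h1, h2⟩⟩
  · exact Or.inr ⟨hc, Or.inr ⟨h, pc_self a⟩⟩
  · exact Or.inl h1
  · exact Or.inr ⟨hc, Or.inr ⟨h1, pc_self a⟩⟩

end PCProof

section Graph

open PCProof

variable (k n m : ℕ) (hn : n - 1 < k) (hm : m - 1 < k)

lemma reach_symm {S : Set (pathChord k n m hn hm).E} {x y : Fin k}
    (h : (pathChord k n m hn hm).Reach S x y) : (pathChord k n m hn hm).Reach S y x := by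
  refine (@Relation.ReflTransGen.symmetric _ _ ⟨?_⟩).symm _ _ h
  rintro u v ⟨e, he, hee⟩
  exact ⟨e, he, by rw [hee, Sym2.eq_swap]⟩

lemma pc_reach_aux (S : Set (Fin (k-1) ⊕ Unit)) :
    ∀ d p q (hp : p < k) (hq : q < k), p ≤ q → q - p = d → pc k S p q →
    (pathChord k n m hn hm).Reach S ⟨p, hp⟩ ⟨q, hq⟩ := by
  intro d
  induction d with
  | zero =>
    intro p q hp hq hpq hd _
    have : p = q := by omega
    subst this
    exact Relation.ReflTransGen.refl
  | succ d ih =>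
    intro p q hp hq hpq hd hpc
    have hpk : p < k - 1 := by omega
    have hmem : Sum.inl (⟨p, hpk⟩ : Fin (k-1)) ∈ S := pc_mem hpc (by omega) (by omega)
    have step : (pathChord k n m hn hm).Reach S ⟨p, hp⟩ ⟨p+1, by omega⟩ :=
      Relation.ReflTransGen.single ⟨Sum.inl ⟨p, hpk⟩, hmem, rfl⟩
    exact step.trans (ih (p+1) q (by omega) hq (by omega) (by omega)
      (pc_shrink hpc (by omega) (by omega)))

lemma pc_reach {S : Set (Fin (k-1) ⊕ Unit)} {x y : Fin k} (h : pc k S x.1 y.1) :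
    (pathChord k n m hn hm).Reach S x y := by
  rcases le_total x.1 y.1 with h' | h'
  · exact pc_reach_aux k n m hn hm S (y.1 - x.1) x.1 y.1 x.2 y.2 h' rfl h
  · exact reach_symm k n m hn hm
      (pc_reach_aux k n m hn hm S (x.1 - y.1) y.1 x.1 y.2 x.2 h' rfl (pc_symm h))

lemma reach_iff (S : Set (Fin (k-1) ⊕ Unit)) (x y : Fin k) :
    (pathChord k n m hn hm).Reach S x y ↔ Conn k (n-1) (m-1) S x.1 y.1 := by
  constructor
  · intro h
    induction h with
    | refl => exact Or.inl (pc_self x.1)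
    | @tail c y' hxc step ih =>
      obtain ⟨e, he, hee⟩ := step
      cases e with
      | inl i =>
        have hee' : s((⟨i.1, by have := i.isLt; omega⟩ : Fin k),
            (⟨i.1 + 1, by have := i.isLt; omega⟩ : Fin k)) = s(c, y') := hee
        rw [Sym2.eq_iff] at hee'
        have hstep : pc k S i.1 (i.1+1) := pc_single i.isLt he
        rcases hee' with ⟨h1, h2⟩ | ⟨h1, h2⟩
        · have e1 : (c : Fin k).1 = i.1 := by rw [← h1]
          have e2 : (y' : Fin k).1 = i.1 + 1 := by rw [← h2]
          rw [e2]
          exact conn_pc_trans (by rwa [e1] at ih) hstep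
        · have e1 : (y' : Fin k).1 = i.1 := by rw [← h1]
          have e2 : (c : Fin k).1 = i.1 + 1 := by rw [← h2]
          rw [e1]
          exact conn_pc_trans (by rwa [e2] at ih) (pc_symm hstep)
      | inr u =>
        have he' : Sum.inr () ∈ S := by cases u; exact he
        have hee' : s((⟨n-1, hn⟩ : Fin k), (⟨m-1, hm⟩ : Fin k)) = s(c, y') := hee
        rw [Sym2.eq_iff] at hee'
        rcases hee' with ⟨h1, h2⟩ | ⟨h1, h2⟩
        · have e1 : (c : Fin k).1 = n-1 := by rw [← h1]
          have e2 : (y' : Fin k).1 = m-1 := by rw [← h2]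
          rw [e2]
          exact conn_chordR (by rwa [e1] at ih) he'
        · have e1 : (c : Fin k).1 = m-1 := by rw [← h2]
          have e2 : (y' : Fin k).1 = n-1 := by rw [← h1]
          rw [e2]
          exact conn_chordL (by rwa [e1] at ih) he'
  · rintro (h | ⟨hc, ⟨h1, h2⟩ | ⟨h1, h2⟩⟩)
    · exact pc_reach k n m hn hm h
    · have r1 : (pathChord k n m hn hm).Reach S x ⟨n-1, hn⟩ :=
        pc_reach k n m hn hm h1
      have r2 : (pathChord k n m hn hm).Reach S ⟨n-1, hn⟩ ⟨m-1, hm⟩ :=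
        Relation.ReflTransGen.single ⟨Sum.inr (), hc, rfl⟩
      have r3 : (pathChord k n m hn hm).Reach S ⟨m-1, hm⟩ y :=
        pc_reach k n m hn hm h2
      exact (r1.trans r2).trans r3
    · have r1 : (pathChord k n m hn hm).Reach S x ⟨m-1, hm⟩ :=
        pc_reach k n m hn hm h1
      have r2 : (pathChord k n m hn hm).Reach S ⟨m-1, hm⟩ ⟨n-1, hn⟩ :=
        reach_symm k n m hn hm (Relation.ReflTransGen.single ⟨Sum.inr (), hc, rfl⟩)
      have r3 : (pathChord k n m hn hm).Reach S ⟨n-1, hn⟩ y :=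
        pc_reach k n m hn hm h2
      exact (r1.trans r2).trans r3

end Graph
-- PART B (appended after part A when testing)
namespace PCProof

def gA (k : ℕ) (i : Fin (k-1)) : Finset (Fin (k-1) ⊕ Unit) :=
  ({Sum.inl i, Sum.inr ()} : Finset _)ᶜ

def gB (k : ℕ) (i j : Fin (k-1)) : Finset (Fin (k-1) ⊕ Unit) :=
  ({Sum.inl i, Sum.inl j} : Finset _)ᶜ

lemma mem_gA_inl {k : ℕ} {i t : Fin (k-1)} : Sum.inl t ∈ gA k i ↔ t ≠ i := by
  simp [gA]

lemma mem_gA_inr {k : ℕ} {i : Fin (k-1)} {u : Unit} : Sum.inr u ∉ gA k i := by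
  simp [gA]

lemma mem_gB_inl {k : ℕ} {i j t : Fin (k-1)} : Sum.inl t ∈ gB k i j ↔ t ≠ i ∧ t ≠ j := by
  simp [gB]

lemma mem_gB_inr {k : ℕ} {i j : Fin (k-1)} {u : Unit} : Sum.inr u ∈ gB k i j := by
  simp [gB]

def Cset (k a b : ℕ) : Finset (Fin (k-1)) :=
  Finset.univ.filter (fun i => a ≤ i.1 ∧ i.1 < b)

lemma mem_Cset {k a b : ℕ} {i : Fin (k-1)} : i ∈ Cset k a b ↔ a ≤ i.1 ∧ i.1 < b := by
  simp [Cset]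

def Fset (k a b : ℕ) : Finset (Finset (Fin (k-1) ⊕ Unit)) :=
  (Finset.univ.image (gA k)) ∪ ((Cset k a b ×ˢ (Cset k a b)ᶜ).image fun p => gB k p.1 p.2)

lemma mem_Fset {k a b : ℕ} {S : Finset (Fin (k-1) ⊕ Unit)} :
    S ∈ Fset k a b ↔ (∃ i, S = gA k i) ∨
      (∃ i j : Fin (k-1), (a ≤ i.1 ∧ i.1 < b) ∧ ¬(a ≤ j.1 ∧ j.1 < b) ∧ S = gB k i j) := by
  simp only [Fset, Finset.mem_union, Finset.mem_image, Finset.mem_univ, true_and,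
    Finset.mem_product, Finset.mem_compl, mem_Cset, Prod.exists]
  constructor
  · rintro (⟨i, hi⟩ | ⟨i, j, ⟨h1, h2⟩, h3⟩)
    · exact Or.inl ⟨i, hi.symm⟩
    · exact Or.inr ⟨i, j, h1, h2, h3.symm⟩
  · rintro (⟨i, hi⟩ | ⟨i, j, h1, h2, h3⟩)
    · exact Or.inl ⟨i, hi.symm⟩
    · exact Or.inr ⟨i, j, ⟨h1, h2⟩, h3.symm⟩

lemma card_Cset {k a b : ℕ} (hab : a ≤ b) (hbk : b ≤ k - 1) :
    (Cset k a b).card = b - a := by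
  rw [← Nat.card_Ico a b]
  apply Finset.card_bij (fun (i : Fin (k-1)) _ => i.1)
  · intro i hi
    rw [mem_Cset] at hi
    simp [Finset.mem_Ico, hi.1, hi.2]
  · intro i _ j _ h
    exact Fin.ext h
  · intro t ht
    rw [Finset.mem_Ico] at ht
    exact ⟨⟨t, by omega⟩, by rw [mem_Cset]; exact ⟨ht.1, ht.2⟩, rfl⟩

lemma gA_injective {k : ℕ} : Function.Injective (gA k) := by
  intro i j h
  by_contra hne
  have h1 : Sum.inl i ∈ gA k j := mem_gA_inl.mpr hne
  rw [← h] at h1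
  exact (mem_gA_inl.mp h1) rfl

lemma card_Fset {k a b : ℕ} (hab : a ≤ b) (hbk : b ≤ k - 1) :
    (Fset k a b).card = (k-1) + (b-a) * ((k-1) - (b-a)) := by
  have hdisj : Disjoint (Finset.univ.image (gA k))
      (((Cset k a b ×ˢ (Cset k a b)ᶜ)).image fun p => gB k p.1 p.2) := by
    rw [Finset.disjoint_left]
    rintro S hS hS'
    simp only [Finset.mem_image, Finset.mem_univ, true_and, Prod.exists] at hS hS'
    obtain ⟨i, hi⟩ := hS
    obtain ⟨p, q, _, hpq⟩ := hS'
    have h1 : Sum.inr () ∈ gB k p q := mem_gB_inr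
    rw [hpq, ← hi] at h1
    exact mem_gA_inr h1
  rw [Fset, Finset.card_union_of_disjoint hdisj,
    Finset.card_image_of_injective _ gA_injective]
  have hinj : Set.InjOn (fun p : Fin (k-1) × Fin (k-1) => gB k p.1 p.2)
      ↑(Cset k a b ×ˢ (Cset k a b)ᶜ) := by
    rintro ⟨i, j⟩ hij ⟨i', j'⟩ hij' h
    simp only [Finset.coe_product, Set.mem_prod, Finset.mem_coe, mem_Cset,
      Finset.mem_compl] at hij hij'
    simp only at h
    have hii' : i = i' := by
      have h1 : Sum.inl i ∉ gB k i' j' := by rw [← h, mem_gB_inl]; tauto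
      rw [mem_gB_inl] at h1
      push_neg at h1
      by_cases hii : i = i'
      · exact hii
      · exact absurd ((h1 hii) ▸ hij.1) hij'.2
    have hjj' : j = j' := by
      have h2 : Sum.inl j ∉ gB k i' j' := by rw [← h, mem_gB_inl]; tauto
      rw [mem_gB_inl] at h2
      push_neg at h2
      by_cases hji : j = i'
      · exact absurd (hji ▸ hij'.1) hij.2
      · exact h2 hji
    rw [hii', hjj']
  rw [Finset.card_image_of_injOn hinj, Finset.card_product, Finset.card_compl,
    card_Cset hab hbk]
  simp [Finset.card_univ]

end PCProof
-- PART C1: helper lemmas (appended after A, B when testing)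
namespace PCProof

lemma mkpc {k : ℕ} {S : Set (Fin (k-1) ⊕ Unit)} {p q : ℕ} (hq : max p q ≤ k - 1)
    (hcond : ∀ t (h : t < k-1), min p q ≤ t → t < max p q →
      Sum.inl (⟨t, h⟩ : Fin (k-1)) ∈ S) : pc k S p q :=
  fun t h1 h2 => ⟨by omega, hcond t (by omega) h1 h2⟩

lemma not_pc {k : ℕ} {S : Set (Fin (k-1) ⊕ Unit)} {p q : ℕ} (h : ¬ pc k S p q) :
    ∃ t, min p q ≤ t ∧ t < max p q ∧
      ∀ (ht : t < k-1), Sum.inl (⟨t, ht⟩ : Fin (k-1)) ∉ S := by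
  simp only [pc] at h
  push_neg at h
  obtain ⟨t, h1, h2, h3⟩ := h
  exact ⟨t, h1, h2, h3⟩

variable {k n m : ℕ}

/-- no chord, two missing path edges is impossible -/
lemma no_two (hk : 4 ≤ k) (S : Finset (Fin (k-1) ⊕ Unit))
    (hsp : ∀ t, t < k → Conn k (n-1) (m-1) ↑S 0 t ∨ Conn k (n-1) (m-1) ↑S (k-1) t)
    (hnc : Sum.inr () ∉ S)
    (p q : ℕ) (hpq : p < q) (hqk : q < k - 1)
    (hp : ∀ (ht : p < k-1), Sum.inl (⟨p, ht⟩ : Fin (k-1)) ∉ (↑S : Set (Fin (k-1) ⊕ Unit)))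
    (hq : ∀ (ht : q < k-1), Sum.inl (⟨q, ht⟩ : Fin (k-1)) ∉ (↑S : Set (Fin (k-1) ⊕ Unit))) : False := by
  rcases hsp (p+1) (by omega) with (h | ⟨hc, -⟩) | (h | ⟨hc, -⟩)
  · exact hp (by omega) (pc_mem h (by omega) (by omega))
  · exact hnc hc
  · exact hq (by omega) (pc_mem h (by omega) (by omega))
  · exact hnc hc

/-- chord present, two missing path edges inside [a,b) is impossible -/
lemma no_two_inC (hk : 4 ≤ k) (hn2 : 2 ≤ n) (hnm : n + 2 ≤ m) (hmk : m ≤ k - 1)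
    (S : Finset (Fin (k-1) ⊕ Unit))
    (hsp : ∀ t, t < k → Conn k (n-1) (m-1) ↑S 0 t ∨ Conn k (n-1) (m-1) ↑S (k-1) t)
    (p q : ℕ) (hap : n-1 ≤ p) (hpq : p < q) (hqb : q < m-1)
    (hp : ∀ (ht : p < k-1), Sum.inl (⟨p, ht⟩ : Fin (k-1)) ∉ (↑S : Set (Fin (k-1) ⊕ Unit)))
    (hq : ∀ (ht : q < k-1), Sum.inl (⟨q, ht⟩ : Fin (k-1)) ∉ (↑S : Set (Fin (k-1) ⊕ Unit))) : False := by
  rcases hsp (p+1) (by omega) with (h | ⟨-, ⟨h1, h2⟩ | ⟨h1, h2⟩⟩) |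
    (h | ⟨-, ⟨h1, h2⟩ | ⟨h1, h2⟩⟩)
  · exact hp (by omega) (pc_mem h (by omega) (by omega))
  · exact hq (by omega) (pc_mem h2 (by omega) (by omega))
  · exact hp (by omega) (pc_mem h1 (by omega) (by omega))
  · exact hq (by omega) (pc_mem h (by omega) (by omega))
  · exact hq (by omega) (pc_mem h2 (by omega) (by omega))
  · exact hp (by omega) (pc_mem h2 (by omega) (by omega))

/-- chord present, one missing inside, two missing outside is impossible -/
lemma no_two_outC (hk : 4 ≤ k) (hn2 : 2 ≤ n) (hnm : n + 2 ≤ m) (hmk : m ≤ k - 1)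
    (S : Finset (Fin (k-1) ⊕ Unit))
    (hsp : ∀ t, t < k → Conn k (n-1) (m-1) ↑S 0 t ∨ Conn k (n-1) (m-1) ↑S (k-1) t)
    (i p q : ℕ) (hai : n-1 ≤ i) (hib : i < m-1)
    (hpq : p < q) (hpk : p < k-1) (hqk : q < k-1)
    (hpo : ¬(n-1 ≤ p ∧ p < m-1)) (hqo : ¬(n-1 ≤ q ∧ q < m-1))
    (hi : ∀ (ht : i < k-1), Sum.inl (⟨i, ht⟩ : Fin (k-1)) ∉ (↑S : Set (Fin (k-1) ⊕ Unit)))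
    (hp : ∀ (ht : p < k-1), Sum.inl (⟨p, ht⟩ : Fin (k-1)) ∉ (↑S : Set (Fin (k-1) ⊕ Unit)))
    (hq : ∀ (ht : q < k-1), Sum.inl (⟨q, ht⟩ : Fin (k-1)) ∉ (↑S : Set (Fin (k-1) ⊕ Unit))) : False := by
  rcases lt_or_ge q (n-1) with hq1 | hq1
  · -- both p < q < a
    rcases hsp (p+1) (by omega) with (h | ⟨-, ⟨h1, h2⟩ | ⟨h1, h2⟩⟩) |
      (h | ⟨-, ⟨h1, h2⟩ | ⟨h1, h2⟩⟩)
    · exact hp (by omega) (pc_mem h (by omega) (by omega))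
    · exact hp (by omega) (pc_mem h1 (by omega) (by omega))
    · exact hp (by omega) (pc_mem h1 (by omega) (by omega))
    · exact hq (by omega) (pc_mem h (by omega) (by omega))
    · exact hi (by omega) (pc_mem h2 (by omega) (by omega))
    · exact hq (by omega) (pc_mem h2 (by omega) (by omega))
  · have hqb : m - 1 ≤ q := by omega
    rcases lt_or_ge p (n-1) with hp1 | hp1
    · -- p < a ≤ b ≤ q : take x = a = n-1
      rcases hsp (n-1) (by omega) with (h | ⟨-, ⟨h1, h2⟩ | ⟨h1, h2⟩⟩) |
        (h | ⟨-, ⟨h1, h2⟩ | ⟨h1, h2⟩⟩)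
      · exact hp (by omega) (pc_mem h (by omega) (by omega))
      · exact hp (by omega) (pc_mem h1 (by omega) (by omega))
      · exact hp (by omega) (pc_mem h1 (by omega) (by omega))
      · exact hi (by omega) (pc_mem h (by omega) (by omega))
      · exact hi (by omega) (pc_mem h1 (by omega) (by omega))
      · exact hq (by omega) (pc_mem h1 (by omega) (by omega))
    · -- b ≤ p < q : take x = p+1
      have hpb : m - 1 ≤ p := by omega
      rcases hsp (p+1) (by omega) with (h | ⟨-, ⟨h1, h2⟩ | ⟨h1, h2⟩⟩) |
        (h | ⟨-, ⟨h1, h2⟩ | ⟨h1, h2⟩⟩)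
      · exact hp (by omega) (pc_mem h (by omega) (by omega))
      · exact hp (by omega) (pc_mem h2 (by omega) (by omega))
      · exact hi (by omega) (pc_mem h1 (by omega) (by omega))
      · exact hq (by omega) (pc_mem h (by omega) (by omega))
      · exact hq (by omega) (pc_mem h1 (by omega) (by omega))
      · exact hq (by omega) (pc_mem h1 (by omega) (by omega))

end PCProof
-- PART C2
namespace PCProof

variable {k n m : ℕ}

lemma gA_twoforest (hk : 4 ≤ k) (hn : n-1 < k) (hm : m-1 < k) (hu : 0 < k)
    (hv : k-1 < k) (i : Fin (k-1)) :
    (pathChord k n m hn hm).IsTwoForest ⟨0, hu⟩ ⟨k-1, hv⟩ (gA k i) := by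
  have hik := i.isLt
  refine ⟨?_, ?_, ?_⟩
  · -- forest
    intro e he x y hends hreach
    have hconn := (reach_iff k n m hn hm _ x y).mp hreach
    cases e with
    | inr u => exact mem_gA_inr he
    | inl l =>
      have hlk := l.isLt
      have hrefut : ¬ Conn k (n-1) (m-1) ((↑(gA k i) : Set (Fin (k-1) ⊕ Unit)) \
          {Sum.inl l}) l.1 (l.1+1) := by
        rintro (h | ⟨hc, -⟩)
        · exact (pc_mem h (j := l.1) (by omega) (by omega) (hj := l.isLt)).2 rfl
        · exact mem_gA_inr hc.1
      have hends' : s((⟨l.1, by omega⟩ : Fin k), (⟨l.1+1, by omega⟩ : Fin k)) = s(x, y) :=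
        hends
      replace hends' := Sym2.eq_iff.mp hends'
      rcases hends' with ⟨h1, h2⟩ | ⟨h1, h2⟩
      · subst h1; subst h2; exact hrefut hconn
      · subst h1; subst h2; exact hrefut (conn_symm hconn)
  · -- separation
    intro hreach
    have hconn : Conn k (n-1) (m-1) (↑(gA k i) : Set (Fin (k-1) ⊕ Unit)) 0 (k-1) :=
      (reach_iff k n m hn hm _ ⟨0, hu⟩ ⟨k-1, hv⟩).mp hreach
    rcases hconn with h | ⟨hc, -⟩
    · exact (mem_gA_inl.mp (pc_mem h (j := i.1) (by omega) (by omega) (hj := i.isLt))) rfl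
    · exact mem_gA_inr hc
  · -- spanning
    intro x
    obtain ⟨t, ht⟩ := x
    rcases le_or_gt t i.1 with hx | hx
    · left
      have hgoal : Conn k (n-1) (m-1) (↑(gA k i) : Set (Fin (k-1) ⊕ Unit)) 0 t := by
        refine Or.inl (mkpc (by omega) ?_)
        intro s hs h1 h2
        rw [Finset.mem_coe, mem_gA_inl]
        intro hsi
        have : s = i.1 := congrArg Fin.val hsi
        omega
      exact (reach_iff k n m hn hm _ ⟨0, hu⟩ ⟨t, ht⟩).mpr hgoal
    · right
      have hgoal : Conn k (n-1) (m-1) (↑(gA k i) : Set (Fin (k-1) ⊕ Unit)) (k-1) t := by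
        refine Or.inl (mkpc (by omega) ?_)
        intro s hs h1 h2
        rw [Finset.mem_coe, mem_gA_inl]
        intro hsi
        have : s = i.1 := congrArg Fin.val hsi
        omega
      exact (reach_iff k n m hn hm _ ⟨k-1, hv⟩ ⟨t, ht⟩).mpr hgoal

lemma gB_twoforest (hk : 4 ≤ k) (hn2 : 2 ≤ n) (hnm : n + 2 ≤ m) (hmk : m ≤ k - 1)
    (hn : n-1 < k) (hm : m-1 < k) (hu : 0 < k) (hv : k-1 < k) (i j : Fin (k-1))
    (hi : n-1 ≤ i.1 ∧ i.1 < m-1) (hj : ¬(n-1 ≤ j.1 ∧ j.1 < m-1)) :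
    (pathChord k n m hn hm).IsTwoForest ⟨0, hu⟩ ⟨k-1, hv⟩ (gB k i j) := by
  have hik := i.isLt
  have hjk := j.isLt
  obtain ⟨hi1, hi2⟩ := hi
  have hij : i.1 ≠ j.1 := by omega
  -- membership helper
  have hmem : ∀ (s : ℕ) (hs : s < k-1), s ≠ i.1 → s ≠ j.1 →
      Sum.inl (⟨s, hs⟩ : Fin (k-1)) ∈ gB k i j := by
    intro s hs h1 h2
    rw [mem_gB_inl]
    constructor
    · intro h; exact h1 (congrArg Fin.val h)
    · intro h; exact h2 (congrArg Fin.val h)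
  have hchord : Sum.inr () ∈ (↑(gB k i j) : Set (Fin (k-1) ⊕ Unit)) := mem_gB_inr
  refine ⟨?_, ?_, ?_⟩
  · -- forest
    intro e he x y hends hreach
    have hconn := (reach_iff k n m hn hm _ x y).mp hreach
    cases e with
    | inr u =>
      have hrefut : ¬ Conn k (n-1) (m-1) ((↑(gB k i j) : Set (Fin (k-1) ⊕ Unit)) \
          {Sum.inr u}) (n-1) (m-1) := by
        rintro (h | ⟨hc, -⟩)
        · exact (mem_gB_inl.mp (pc_mem h (j := i.1) (by omega) (by omega)
            (hj := i.isLt)).1).1 rfl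
        · exact hc.2 (by cases u; rfl)
      have hends' : s((⟨n-1, hn⟩ : Fin k), (⟨m-1, hm⟩ : Fin k)) = s(x, y) := hends
      replace hends' := Sym2.eq_iff.mp hends'
      rcases hends' with ⟨h1, h2⟩ | ⟨h1, h2⟩
      · subst h1; subst h2; exact hrefut hconn
      · subst h1; subst h2; exact hrefut (conn_symm hconn)
    | inl l =>
      have hlk := l.isLt
      have hli : l ≠ i := fun h => by rw [h] at he; exact (mem_gB_inl.mp he).1 rfl
      have hli' : l.1 ≠ i.1 := fun h => hli (Fin.ext h)
      have hrefut : ¬ Conn k (n-1) (m-1) ((↑(gB k i j) : Set (Fin (k-1) ⊕ Unit)) \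
          {Sum.inl l}) l.1 (l.1+1) := by
        have missI : ∀ (hI : i.1 < k-1), Sum.inl (⟨i.1, hI⟩ : Fin (k-1)) ∉
            ((↑(gB k i j) : Set (Fin (k-1) ⊕ Unit)) \ {Sum.inl l}) := by
          intro hI hmm
          exact (mem_gB_inl.mp hmm.1).1 rfl
        have missL : ∀ (hL : l.1 < k-1), Sum.inl (⟨l.1, hL⟩ : Fin (k-1)) ∉
            ((↑(gB k i j) : Set (Fin (k-1) ⊕ Unit)) \ {Sum.inl l}) := by
          intro hL hmm
          exact hmm.2 rfl
        rintro (h | ⟨-, ⟨h1, h2⟩ | ⟨h1, h2⟩⟩)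
        · exact missL l.isLt (pc_mem h (by omega) (by omega))
        · -- pc l a ∧ pc b (l+1)
          rcases le_or_gt l.1 (n-1) with hl | hl
          · have hx1 : min (m-1) (l.1+1) ≤ i.1 := by omega
            have hx2 : i.1 < max (m-1) (l.1+1) := by omega
            exact missI i.isLt (pc_mem h2 hx1 hx2)
          · rcases lt_or_ge l.1 (m-1) with hlb | hlb
            · rcases lt_or_ge i.1 l.1 with hil | hil
              · exact missI i.isLt (pc_mem h1 (by omega) (by omega))
              · exact missI i.isLt (pc_mem h2 (by omega) (by omega))
            · exact missI i.isLt (pc_mem h1 (by omega) (by omega))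
        · -- pc l b ∧ pc a (l+1)
          rcases lt_trichotomy l.1 (n-1) with hl | hl | hl
          · exact missI i.isLt (pc_mem h1 (by omega) (by omega))
          · exact missL l.isLt (pc_mem h1 (by omega) (by omega))
          · rcases lt_or_ge l.1 (m-1) with hlb | hlb
            · exact missL l.isLt (pc_mem h1 (by omega) (by omega))
            · exact missI i.isLt (pc_mem h2 (by omega) (by omega))
      have hends' : s((⟨l.1, by omega⟩ : Fin k), (⟨l.1+1, by omega⟩ : Fin k)) = s(x, y) :=
        hends
      replace hends' := Sym2.eq_iff.mp hends'
      rcases hends' with ⟨h1, h2⟩ | ⟨h1, h2⟩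
      · subst h1; subst h2; exact hrefut hconn
      · subst h1; subst h2; exact hrefut (conn_symm hconn)
  · -- separation
    intro hreach
    have hconn : Conn k (n-1) (m-1) (↑(gB k i j) : Set (Fin (k-1) ⊕ Unit)) 0 (k-1) :=
      (reach_iff k n m hn hm _ ⟨0, hu⟩ ⟨k-1, hv⟩).mp hreach
    have missI : ∀ (hI : i.1 < k-1), Sum.inl (⟨i.1, hI⟩ : Fin (k-1)) ∉
        (↑(gB k i j) : Set (Fin (k-1) ⊕ Unit)) := fun hI hmm => (mem_gB_inl.mp hmm).1 rfl
    have missJ : ∀ (hJ : j.1 < k-1), Sum.inl (⟨j.1, hJ⟩ : Fin (k-1)) ∉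
        (↑(gB k i j) : Set (Fin (k-1) ⊕ Unit)) := fun hJ hmm => (mem_gB_inl.mp hmm).2 rfl
    rcases hconn with h | ⟨-, ⟨h1, h2⟩ | ⟨h1, h2⟩⟩
    · exact missI i.isLt (pc_mem h (by omega) (by omega))
    · rcases lt_or_ge j.1 (n-1) with hja | hja
      · exact missJ j.isLt (pc_mem h1 (by omega) (by omega))
      · exact missJ j.isLt (pc_mem h2 (by omega) (by omega))
    · exact missI i.isLt (pc_mem h1 (by omega) (by omega))
  · -- spanning
    intro x
    obtain ⟨t, ht⟩ := x
    rcases lt_or_ge j.1 (n-1) with hja | hja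
    · -- j < a
      rcases le_or_gt t j.1 with h1 | h1
      · left
        have hgoal : Conn k (n-1) (m-1) (↑(gB k i j) : Set (Fin (k-1) ⊕ Unit)) 0 t := by
          refine Or.inl (mkpc (by omega) ?_)
          intro s hs hs1 hs2
          exact hmem s hs (by omega) (by omega)
        exact (reach_iff k n m hn hm _ ⟨0, hu⟩ ⟨t, ht⟩).mpr hgoal
      · rcases le_or_gt t i.1 with h2 | h2
        · right
          have hgoal : Conn k (n-1) (m-1) (↑(gB k i j) : Set (Fin (k-1) ⊕ Unit)) (k-1) t := by
            refine Or.inr ⟨hchord, Or.inr ⟨mkpc (by omega) ?_, mkpc (by omega) ?_⟩⟩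
            · intro s hs hs1 hs2
              exact hmem s hs (by omega) (by omega)
            · intro s hs hs1 hs2
              exact hmem s hs (by omega) (by omega)
          exact (reach_iff k n m hn hm _ ⟨k-1, hv⟩ ⟨t, ht⟩).mpr hgoal
        · right
          have hgoal : Conn k (n-1) (m-1) (↑(gB k i j) : Set (Fin (k-1) ⊕ Unit)) (k-1) t := by
            refine Or.inl (mkpc (by omega) ?_)
            intro s hs hs1 hs2
            exact hmem s hs (by omega) (by omega)
          exact (reach_iff k n m hn hm _ ⟨k-1, hv⟩ ⟨t, ht⟩).mpr hgoal
    · have hjb : m-1 ≤ j.1 := by omega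
      rcases le_or_gt t i.1 with h1 | h1
      · left
        have hgoal : Conn k (n-1) (m-1) (↑(gB k i j) : Set (Fin (k-1) ⊕ Unit)) 0 t := by
          refine Or.inl (mkpc (by omega) ?_)
          intro s hs hs1 hs2
          exact hmem s hs (by omega) (by omega)
        exact (reach_iff k n m hn hm _ ⟨0, hu⟩ ⟨t, ht⟩).mpr hgoal
      · rcases le_or_gt t j.1 with h2 | h2
        · left
          have hgoal : Conn k (n-1) (m-1) (↑(gB k i j) : Set (Fin (k-1) ⊕ Unit)) 0 t := by
            refine Or.inr ⟨hchord, Or.inl ⟨mkpc (by omega) ?_, mkpc (by omega) ?_⟩⟩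
            · intro s hs hs1 hs2
              exact hmem s hs (by omega) (by omega)
            · intro s hs hs1 hs2
              exact hmem s hs (by omega) (by omega)
          exact (reach_iff k n m hn hm _ ⟨0, hu⟩ ⟨t, ht⟩).mpr hgoal
        · right
          have hgoal : Conn k (n-1) (m-1) (↑(gB k i j) : Set (Fin (k-1) ⊕ Unit)) (k-1) t := by
            refine Or.inl (mkpc (by omega) ?_)
            intro s hs hs1 hs2
            exact hmem s hs (by omega) (by omega)
          exact (reach_iff k n m hn hm _ ⟨k-1, hv⟩ ⟨t, ht⟩).mpr hgoal

end PCProof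
-- PART C3
namespace PCProof

variable {k n m : ℕ}

lemma twoforest_mem (hk : 4 ≤ k) (hn2 : 2 ≤ n) (hnm : n + 2 ≤ m) (hmk : m ≤ k - 1)
    (hn : n-1 < k) (hm : m-1 < k) (hu : 0 < k) (hv : k-1 < k)
    (S : Finset (Fin (k-1) ⊕ Unit))
    (htf : (pathChord k n m hn hm).IsTwoForest ⟨0, hu⟩ ⟨k-1, hv⟩ S) :
    S ∈ Fset k (n-1) (m-1) := by
  obtain ⟨hforest, hsep, hspan⟩ := htf
  have hsp : ∀ t, t < k →
      Conn k (n-1) (m-1) ↑S 0 t ∨ Conn k (n-1) (m-1) ↑S (k-1) t := by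
    intro t ht
    rcases hspan ⟨t, ht⟩ with h | h
    · exact Or.inl ((reach_iff k n m hn hm ↑S ⟨0, hu⟩ ⟨t, ht⟩).mp h)
    · exact Or.inr ((reach_iff k n m hn hm ↑S ⟨k-1, hv⟩ ⟨t, ht⟩).mp h)
  have hnc : ¬ Conn k (n-1) (m-1) ↑S 0 (k-1) := fun c =>
    hsep ((reach_iff k n m hn hm ↑S ⟨0, hu⟩ ⟨k-1, hv⟩).mpr c)
  by_cases hc : Sum.inr () ∈ S
  · -- chord present
    have hforest_ch := hforest (Sum.inr ()) hc ⟨n-1, hn⟩ ⟨m-1, hm⟩ rfl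
    have hncc : ¬ Conn k (n-1) (m-1)
        ((↑S : Set (Fin (k-1) ⊕ Unit)) \ {Sum.inr ()}) (n-1) (m-1) :=
      fun c => hforest_ch ((reach_iff k n m hn hm _ ⟨n-1, hn⟩ ⟨m-1, hm⟩).mpr c)
    have hpcc : ¬ pc k ((↑S : Set (Fin (k-1) ⊕ Unit)) \ {Sum.inr ()}) (n-1) (m-1) :=
      fun h => hncc (Or.inl h)
    obtain ⟨i0, hi1, hi2, hi3⟩ := not_pc hpcc
    have hia1 : n-1 ≤ i0 := by omega
    have hia2 : i0 < m-1 := by omega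
    have hi0k : i0 < k-1 := by omega
    have hi3' : ∀ (ht : i0 < k-1),
        Sum.inl (⟨i0, ht⟩ : Fin (k-1)) ∉ (↑S : Set (Fin (k-1) ⊕ Unit)) := by
      intro ht hmm
      exact hi3 ht ⟨hmm, by simp⟩
    have hAB : ¬ (pc k ↑S 0 (n-1) ∧ pc k ↑S (m-1) (k-1)) :=
      fun h => hnc (Or.inr ⟨hc, Or.inl h⟩)
    have hj : ∃ j0, j0 < k-1 ∧ ¬(n-1 ≤ j0 ∧ j0 < m-1) ∧ ∀ (ht : j0 < k-1),
        Sum.inl (⟨j0, ht⟩ : Fin (k-1)) ∉ (↑S : Set (Fin (k-1) ⊕ Unit)) := by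
      rcases not_and_or.mp hAB with h | h
      · obtain ⟨t, ht1, ht2, ht3⟩ := not_pc h
        exact ⟨t, by omega, by omega, ht3⟩
      · obtain ⟨t, ht1, ht2, ht3⟩ := not_pc h
        exact ⟨t, by omega, by omega, ht3⟩
    obtain ⟨j0, hj0k, hj0o, hj3⟩ := hj
    have huniq : ∀ l : Fin (k-1), l.1 ≠ i0 → l.1 ≠ j0 → Sum.inl l ∈ S := by
      intro l h1 h2
      by_contra hl
      have hl' : ∀ (ht : l.1 < k-1),
          Sum.inl (⟨l.1, ht⟩ : Fin (k-1)) ∉ (↑S : Set (Fin (k-1) ⊕ Unit)) :=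
        fun ht hmm => hl hmm
      rcases Classical.em (n-1 ≤ l.1 ∧ l.1 < m-1) with hlin | hlout
      · rcases lt_or_gt_of_ne h1 with hlt | hgt
        · exact no_two_inC hk hn2 hnm hmk S hsp l.1 i0 (by omega) hlt (by omega) hl' hi3'
        · exact no_two_inC hk hn2 hnm hmk S hsp i0 l.1 (by omega) hgt (by omega) hi3' hl'
      · rcases lt_or_gt_of_ne h2 with hlt | hgt
        · exact no_two_outC hk hn2 hnm hmk S hsp i0 l.1 j0 hia1 hia2 hlt l.isLt hj0k
            hlout hj0o hi3' hl' hj3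
        · exact no_two_outC hk hn2 hnm hmk S hsp i0 j0 l.1 hia1 hia2 hgt hj0k l.isLt
            hj0o hlout hi3' hj3 hl'
    refine mem_Fset.mpr (Or.inr ⟨⟨i0, hi0k⟩, ⟨j0, hj0k⟩, ⟨hia1, hia2⟩, hj0o, ?_⟩)
    ext e
    cases e with
    | inl l =>
      simp only [mem_gB_inl]
      constructor
      · intro hmem
        constructor
        · intro hkeq
          rw [hkeq] at hmem
          exact hi3' hi0k hmem
        · intro hkeq
          rw [hkeq] at hmem
          exact hj3 hj0k hmem
      · rintro ⟨h1, h2⟩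
        exact huniq l (fun h => h1 (Fin.ext h)) (fun h => h2 (Fin.ext h))
    | inr u =>
      cases u
      exact iff_of_true hc mem_gB_inr
  · -- no chord
    have h0 : ¬ pc k ↑S 0 (k-1) := fun h => hnc (Or.inl h)
    obtain ⟨i0, hi1, hi2, hi3⟩ := not_pc h0
    have hi0k : i0 < k-1 := by omega
    have huniq : ∀ l : Fin (k-1), l.1 ≠ i0 → Sum.inl l ∈ S := by
      intro l hne
      by_contra hl
      have hl' : ∀ (ht : l.1 < k-1),
          Sum.inl (⟨l.1, ht⟩ : Fin (k-1)) ∉ (↑S : Set (Fin (k-1) ⊕ Unit)) :=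
        fun ht hmm => hl hmm
      rcases lt_or_gt_of_ne hne with hlt | hgt
      · exact no_two hk S hsp hc l.1 i0 hlt hi0k hl' hi3
      · exact no_two hk S hsp hc i0 l.1 hgt l.isLt hi3 hl'
    refine mem_Fset.mpr (Or.inl ⟨⟨i0, hi0k⟩, ?_⟩)
    ext e
    cases e with
    | inl l =>
      simp only [mem_gA_inl]
      constructor
      · intro hmem hkeq
        rw [hkeq] at hmem
        exact hi3 hi0k hmem
      · intro hne
        exact huniq l (fun h => hne (Fin.ext h))
    | inr u =>
      cases u
      exact iff_of_false hc mem_gA_inr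

lemma twoforest_iff (hk : 4 ≤ k) (hn2 : 2 ≤ n) (hnm : n + 2 ≤ m) (hmk : m ≤ k - 1)
    (hn : n-1 < k) (hm : m-1 < k) (hu : 0 < k) (hv : k-1 < k)
    (S : Finset (Fin (k-1) ⊕ Unit)) :
    (pathChord k n m hn hm).IsTwoForest ⟨0, hu⟩ ⟨k-1, hv⟩ S ↔
      S ∈ Fset k (n-1) (m-1) := by
  constructor
  · exact twoforest_mem hk hn2 hnm hmk hn hm hu hv S
  · intro hS
    rcases mem_Fset.mp hS with ⟨i, rfl⟩ | ⟨i, j, hi, hj, rfl⟩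
    · exact gA_twoforest hk hn hm hu hv i
    · exact gB_twoforest hk hn2 hnm hmk hn hm hu hv i j hi hj

end PCProof

open PCProof in
/-- For `k ≥ 4` and `2 ≤ n`, `n + 2 ≤ m ≤ k - 1`, the number of spanning 2-forests of
the path with one chord `{v_n, v_m}`, separating `v₁` and `v_k`, equals
`(k - m + n)(m - n + 1) - 1`. -/
theorem stmt_3 (k n m : ℕ) (hk : 4 ≤ k) (hn : 2 ≤ n) (hnm : n + 2 ≤ m) (hm : m ≤ k - 1) :
    (pathChord k n m (by omega) (by omega)).twoForestCount
        ⟨0, by omega⟩ ⟨k - 1, by omega⟩ =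
      (k - m + n) * (m - n + 1) - 1 := by
  have hn' : n - 1 < k := by omega
  have hm' : m - 1 < k := by omega
  have hu : (0:ℕ) < k := by omega
  have hv : k - 1 < k := by omega
  have hequiv : {S : Finset (Fin (k-1) ⊕ Unit) //
      (pathChord k n m hn' hm').IsTwoForest ⟨0, hu⟩ ⟨k-1, hv⟩ S}
      ≃ {S : Finset (Fin (k-1) ⊕ Unit) // S ∈ Fset k (n-1) (m-1)} :=
    Equiv.subtypeEquivRight (fun S => twoforest_iff hk hn hnm hm hn' hm' hu hv S)
  have hcard : Nat.card {S : Finset (Fin (k-1) ⊕ Unit) // S ∈ Fset k (n-1) (m-1)} =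
      (Fset k (n-1) (m-1)).card := by
    rw [Nat.card_eq_fintype_card, Fintype.card_coe]
  have hfin : (pathChord k n m hn' hm').twoForestCount ⟨0, hu⟩ ⟨k-1, hv⟩ =
      (Fset k (n-1) (m-1)).card :=
    (Nat.card_congr hequiv).trans hcard
  have harith : (Fset k (n-1) (m-1)).card = (k - m + n) * (m - n + 1) - 1 := by
    rw [card_Fset (by omega) (by omega)]
    have h1 : m - 1 - (n - 1) = m - n := by omega
    rw [h1]
    have hprod : 1 ≤ (k - m + n) * (m - n + 1) :=
      Nat.one_le_iff_ne_zero.mpr (by positivity)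
    zify [show m - n ≤ k - 1 by omega, show n ≤ m by omega, show m ≤ k by omega,
      show 1 ≤ k by omega, hprod]
    ring
  exact hfin.trans harith
end

section
/- Let C_n be the cycle graph on vertices v₁,...,v_n (edges {v_i,v_{i+1}} indices mod n), with distinguished vertices v₁ and v_t where 3 ≤ t ≤ ⌈n/2⌉. Let X be obtained from C_n by adding a chord between v_i and v_{i+1} where 1 ≤ i < t and (i,t) ≠ (1,2). Then the number of spanning 2-forests of X with one tree containing v₁ and the other containing v_t equals (2t − 3)(n − t + 1). -/
/-- The cycle graph on vertices `v₁, …, v_n` (encoded as `Fin n`, `v_i` corresponding to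
index `i - 1`, edges `{v_i, v_{i+1}}` with indices mod `n`) together with one extra
chord joining the vertices with indices `a` and `b`. -/
def cycleChord (n a b : ℕ) (hn : 0 < n) (ha : a < n) (hb : b < n) : Multigraph where
  V := Fin n
  E := Fin n ⊕ Unit
  ends := fun e =>
    match e with
    | .inl i => s(i, (⟨(i.1 + 1) % n, Nat.mod_lt _ hn⟩ : Fin n))
    | .inr _ => s((⟨a, ha⟩ : Fin n), (⟨b, hb⟩ : Fin n))

private lemma ends_inl (n a b : ℕ) (hn : 0 < n) (ha : a < n) (hb : b < n) (j : Fin n) :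
    (cycleChord n a b hn ha hb).ends (Sum.inl j) =
      s(j, (⟨(j.1 + 1) % n, Nat.mod_lt _ hn⟩ : Fin n)) := rfl

private lemma ends_inl' (n a b : ℕ) (hn : 0 < n) (ha : a < n) (hb : b < n) (j : ℕ) (hj : j < n) :
    (cycleChord n a b hn ha hb).ends (Sum.inl ⟨j, hj⟩) =
      s((⟨j, hj⟩ : Fin n), (⟨(j + 1) % n, Nat.mod_lt _ hn⟩ : Fin n)) := rfl

private lemma ends_inr (n a b : ℕ) (hn : 0 < n) (ha : a < n) (hb : b < n) :
    (cycleChord n a b hn ha hb).ends (Sum.inr ()) =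
      s((⟨a, ha⟩ : Fin n), (⟨b, hb⟩ : Fin n)) := rfl

private lemma slot_iff {n A B j : ℕ} (hB : B < n) (hj : j < n) (hAB : A < B)
    (hjA : j ≠ A) (hjB : j ≠ B) :
    ((A < j ∧ j ≤ B) ↔ (A < (j + 1) % n ∧ (j + 1) % n ≤ B)) := by
  rcases Nat.lt_or_ge (j + 1) n with h | h
  · rw [Nat.mod_eq_of_lt h]; omega
  · have hjn : j + 1 = n := by omega
    rw [hjn, Nat.mod_self]; omega

private lemma cyc_inv (n a b : ℕ) (hn : 0 < n) (ha : a < n) (hb : b < n) (hab : b = a + 1)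
    (T : Set (Fin n ⊕ Unit)) (A B : ℕ) (hAB : A < B) (hBn : B < n)
    (hA1 : Sum.inl (⟨A, by omega⟩ : Fin n) ∉ T) (hA2 : A = a → Sum.inr () ∉ T)
    (hB1 : Sum.inl (⟨B, hBn⟩ : Fin n) ∉ T) (hB2 : B = a → Sum.inr () ∉ T)
    {x y : Fin n} (h : (cycleChord n a b hn ha hb).Reach T x y) :
    ((A < x.1 ∧ x.1 ≤ B) ↔ (A < y.1 ∧ y.1 ≤ B)) := by
  subst hab
  induction h with
  | refl => exact Iff.rfl
  | @tail w z _ hstep ih =>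
    refine ih.trans ?_
    obtain ⟨e, heT, hends⟩ := hstep
    rcases e with j | u
    · rw [ends_inl n a (a+1) hn ha hb j] at hends
      replace hends := Sym2.eq_iff.mp hends
      have hjA : j.1 ≠ A := by
        intro hh
        exact hA1 (by rw [show (⟨A, by omega⟩ : Fin n) = j from Fin.ext hh.symm]; exact heT)
      have hjB : j.1 ≠ B := by
        intro hh
        exact hB1 (by rw [show (⟨B, hBn⟩ : Fin n) = j from Fin.ext hh.symm]; exact heT)
      have key := slot_iff (n := n) hBn j.isLt hAB hjA hjB
      rcases hends with ⟨h1, h2⟩ | ⟨h1, h2⟩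
      · rw [← h1, ← h2]; exact key
      · rw [← h1, ← h2]; exact key.symm
    · cases u
      have haA : A ≠ a := fun hh => hA2 hh heT
      have haB : B ≠ a := fun hh => hB2 hh heT
      rw [ends_inr n a (a+1) hn ha hb] at hends
      replace hends := Sym2.eq_iff.mp hends
      rcases hends with ⟨h1, h2⟩ | ⟨h1, h2⟩ <;> rw [← h1, ← h2]
      · have : ((A < a ∧ a ≤ B) ↔ (A < a + 1 ∧ a + 1 ≤ B)) := by omega
        exact this
      · have : ((A < a + 1 ∧ a + 1 ≤ B) ↔ (A < a ∧ a ≤ B)) := by omega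
        exact this

private lemma cyc_chain (n a b : ℕ) (hn : 0 < n) (ha : a < n) (hb : b < n)
    (T : Set (Fin n ⊕ Unit)) (s0 : ℕ) :
    ∀ d (hd : s0 + d < n),
      (∀ j, ∀ _hj1 : s0 ≤ j, ∀ _hj2 : j < s0 + d,
        ∃ e ∈ T, (cycleChord n a b hn ha hb).ends e =
          s((⟨j, by omega⟩ : Fin n), (⟨j + 1, by omega⟩ : Fin n))) →
      (cycleChord n a b hn ha hb).Reach T ⟨s0, by omega⟩ ⟨s0 + d, hd⟩ := by
  intro d
  induction d with
  | zero => intro hd _; exact Relation.ReflTransGen.refl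
  | succ d ih =>
    intro hd hs
    refine Relation.ReflTransGen.tail (ih (by omega) fun j h1 h2 => hs j h1 (by omega)) ?_
    exact hs (s0 + d) (by omega) (by omega)

private lemma reach_symm_s4 {G : Multigraph} {T : Set G.E} {x y : G.V} (h : G.Reach T x y) :
    G.Reach T y x := by
  induction h with
  | refl => exact Relation.ReflTransGen.refl
  | tail _ hstep ih =>
    obtain ⟨e, he, hee⟩ := hstep
    exact Relation.ReflTransGen.head ⟨e, he, hee.trans (Sym2.eq_swap)⟩ ih

private lemma cyc_no_adj (n a b : ℕ) (hn : 0 < n) (ha : a < n) (hb : b < n) (hab : b = a + 1)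
    (T : Set (Fin n ⊕ Unit)) (A B : ℕ) (hAB : A < B) (hBn : B < n)
    (hA1 : Sum.inl (⟨A, by omega⟩ : Fin n) ∉ T) (hA2 : A = a → Sum.inr () ∉ T)
    (hB1 : Sum.inl (⟨B, hBn⟩ : Fin n) ∉ T) (hB2 : B = a → Sum.inr () ∉ T)
    (j : ℕ) (hj : j = A ∨ j = B) (x y : Fin n) (hx : x.1 = j) (hy : y.1 = (j + 1) % n) :
    ¬ (cycleChord n a b hn ha hb).Reach T x y := by
  intro h
  have H := cyc_inv n a b hn ha hb hab T A B hAB hBn hA1 hA2 hB1 hB2 h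
  rcases Nat.lt_or_ge (j + 1) n with h1 | h1
  · rw [Nat.mod_eq_of_lt h1] at hy; omega
  · have hjn : j + 1 = n := by omega
    rw [hjn, Nat.mod_self] at hy; omega

def goodS (n a p q : ℕ) (ha : a < n) (hp : p < n) (hq : q < n) (bb : Bool) :
    Finset (Fin n ⊕ Unit) :=
  Finset.univ \ {Sum.inl ⟨p, hp⟩, Sum.inl ⟨q, hq⟩,
    if bb then Sum.inl ⟨a, ha⟩ else Sum.inr ()}

private lemma mem_goodS {n a p q : ℕ} {ha : a < n} {hp : p < n} {hq : q < n} {bb : Bool}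
    {e : Fin n ⊕ Unit} :
    e ∈ goodS n a p q ha hp hq bb ↔
      (e ≠ Sum.inl ⟨p, hp⟩ ∧ e ≠ Sum.inl ⟨q, hq⟩ ∧
        e ≠ (if bb then Sum.inl ⟨a, ha⟩ else Sum.inr ())) := by
  simp [goodS]

private lemma goodS_isTwoForest (n t a b : ℕ) (hn : 0 < n) (ha : a < n) (hb : b < n)
    (hab : b = a + 1) (ht3 : 3 ≤ t) (htn : 2 * t ≤ n + 1) (hat : a ≤ t - 2)
    (p q : ℕ) (hp : p ≤ t - 2) (hpn : p < n) (hq1 : t - 1 ≤ q) (hq2 : q < n)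
    (bb : Bool) (hbb : bb = true → p ≠ a) :
    (cycleChord n a b hn ha hb).IsTwoForest ⟨0, by omega⟩ ⟨t - 1, by omega⟩
      (goodS n a p q ha hpn hq2 bb) := by
  subst hab
  set S := goodS n a p q ha hpn hq2 bb with hSdef
  have hpq : p < q := by omega
  have hmemS : ∀ e, e ∈ S ↔ (e ≠ Sum.inl ⟨p, hpn⟩ ∧ e ≠ Sum.inl ⟨q, hq2⟩ ∧
      e ≠ (if bb then Sum.inl ⟨a, ha⟩ else Sum.inr ())) := fun e => mem_goodS
  -- cut facts for slots p and q
  have hcut_p1 : Sum.inl (⟨p, hpn⟩ : Fin n) ∉ (↑S : Set (Fin n ⊕ Unit)) := by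
    simp [Finset.mem_coe, hmemS]
  have hcut_p2 : p = a → Sum.inr () ∉ (↑S : Set (Fin n ⊕ Unit)) := by
    intro hpa
    have hbf : bb = false := by
      cases bb with
      | false => rfl
      | true => exact absurd hpa (hbb rfl)
    simp [Finset.mem_coe, hmemS, hbf]
  have hcut_q1 : Sum.inl (⟨q, hq2⟩ : Fin n) ∉ (↑S : Set (Fin n ⊕ Unit)) := by
    simp [Finset.mem_coe, hmemS]
  have hcut_q2 : q = a → Sum.inr () ∉ (↑S : Set (Fin n ⊕ Unit)) := by
    intro h; exact absurd h (by omega)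
  -- separation
  have hsep : ¬ (cycleChord n a (a+1) hn ha hb).Reach (↑S : Set (Fin n ⊕ Unit)) ⟨0, by omega⟩ ⟨t-1, by omega⟩ := by
    intro h
    have H := cyc_inv n a (a+1) hn ha hb rfl ↑S p q hpq hq2 hcut_p1 hcut_p2 hcut_q1 hcut_q2 h
    have H' : ((p < 0 ∧ 0 ≤ q) ↔ (p < t - 1 ∧ t - 1 ≤ q)) := H
    omega
  -- steps at every non-deleted slot
  have hstepS : ∀ j : ℕ, ∀ hj : j + 1 < n, j ≠ p → j ≠ q →
      ∃ e ∈ (↑S : Set (Fin n ⊕ Unit)), (cycleChord n a (a+1) hn ha hb).ends e =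
        s((⟨j, by omega⟩ : Fin n), (⟨j + 1, hj⟩ : Fin n)) := by
    intro j hj hjp hjq
    have hfin : (⟨(j + 1) % n, Nat.mod_lt _ hn⟩ : Fin n) = (⟨j + 1, hj⟩ : Fin n) :=
      Fin.ext (Nat.mod_eq_of_lt hj)
    by_cases hja : j = a
    · cases bb with
      | false =>
        refine ⟨Sum.inl ⟨j, by omega⟩, ?_, ?_⟩
        · simp only [Finset.mem_coe, hmemS]
          refine ⟨?_, ?_, by simp⟩ <;> simp only [ne_eq, Sum.inl.injEq, Fin.mk.injEq] <;> omega
        · rw [ends_inl' n a (a+1) hn ha hb j (by omega), hfin]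
      | true =>
        refine ⟨Sum.inr (), ?_, ?_⟩
        · simp only [Finset.mem_coe, hmemS]
          exact ⟨by simp, by simp, by simp⟩
        · subst hja
          rfl
    · refine ⟨Sum.inl ⟨j, by omega⟩, ?_, ?_⟩
      · simp only [Finset.mem_coe, hmemS]
        refine ⟨?_, ?_, ?_⟩
        · simp only [ne_eq, Sum.inl.injEq, Fin.mk.injEq]; omega
        · simp only [ne_eq, Sum.inl.injEq, Fin.mk.injEq]; omega
        · cases bb with
          | false => simp
          | true => simp only [if_true, ne_eq, Sum.inl.injEq, Fin.mk.injEq]; omega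
      · rw [ends_inl' n a (a+1) hn ha hb j (by omega), hfin]
  -- the wrap-around step
  have hwrap : q ≠ n - 1 →
      ∃ e ∈ (↑S : Set (Fin n ⊕ Unit)), (cycleChord n a (a+1) hn ha hb).ends e =
        s((⟨n - 1, by omega⟩ : Fin n), (⟨0, by omega⟩ : Fin n)) := by
    intro hq
    have hfin : (⟨(n - 1 + 1) % n, Nat.mod_lt _ hn⟩ : Fin n) = (⟨0, by omega⟩ : Fin n) := by
      refine Fin.ext ?_
      show (n - 1 + 1) % n = 0
      rw [show n - 1 + 1 = n from by omega, Nat.mod_self]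
    refine ⟨Sum.inl ⟨n - 1, by omega⟩, ?_, ?_⟩
    · simp only [Finset.mem_coe, hmemS]
      refine ⟨?_, ?_, ?_⟩
      · simp only [ne_eq, Sum.inl.injEq, Fin.mk.injEq]; omega
      · simp only [ne_eq, Sum.inl.injEq, Fin.mk.injEq]; omega
      · cases bb with
        | false => simp
        | true => simp only [if_true, ne_eq, Sum.inl.injEq, Fin.mk.injEq]; omega
    · rw [ends_inl' n a (a+1) hn ha hb (n-1) (by omega), hfin]
  -- coverage
  have hcov : ∀ x : Fin n,
      (cycleChord n a (a+1) hn ha hb).Reach (↑S : Set (Fin n ⊕ Unit)) ⟨0, by omega⟩ x ∨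
      (cycleChord n a (a+1) hn ha hb).Reach (↑S : Set (Fin n ⊕ Unit)) ⟨t-1, by omega⟩ x := by
    intro x
    rcases Nat.lt_or_ge p x.1 with hx1 | hx1
    · rcases le_or_gt x.1 q with hx2 | hx2
      · right
        rcases le_or_gt (t-1) x.1 with hx3 | hx3
        · have hc := cyc_chain n a (a+1) hn ha hb ↑S (t-1) (x.1 - (t-1)) (by omega)
            (fun j h1 h2 => hstepS j (by omega) (by omega) (by omega))
          have hx : ((⟨t - 1 + (x.1 - (t-1)), by omega⟩ : Fin n)) = x :=
            Fin.ext (show t - 1 + (x.1 - (t-1)) = x.1 by omega)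
          rw [← hx]
          exact hc
        · have hc := cyc_chain n a (a+1) hn ha hb ↑S x.1 (t - 1 - x.1) (by omega)
            (fun j h1 h2 => hstepS j (by omega) (by omega) (by omega))
          have hx0 : ((⟨x.1, by omega⟩ : Fin n)) = x := Fin.ext rfl
          have hx : ((⟨x.1 + (t - 1 - x.1), by omega⟩ : Fin n)) = (⟨t-1, by omega⟩ : Fin n) :=
            Fin.ext (show x.1 + (t - 1 - x.1) = t - 1 by omega)
          rw [hx0, hx] at hc
          exact reach_symm_s4 hc
      · left
        have hc := cyc_chain n a (a+1) hn ha hb ↑S x.1 (n - 1 - x.1) (by omega)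
          (fun j h1 h2 => hstepS j (by omega) (by omega) (by omega))
        have hxe : ((⟨x.1 + (n - 1 - x.1), by omega⟩ : Fin n)) = (⟨n - 1, by omega⟩ : Fin n) :=
          Fin.ext (show x.1 + (n - 1 - x.1) = n - 1 by omega)
        rw [hxe] at hc
        have hc2 := Relation.ReflTransGen.tail hc (hwrap (by omega))
        have hx0 : ((⟨x.1, by omega⟩ : Fin n)) = x := Fin.ext rfl
        rw [hx0] at hc2
        exact reach_symm_s4 hc2
    · left
      have hc := cyc_chain n a (a+1) hn ha hb ↑S 0 x.1 (by omega)
        (fun j h1 h2 => hstepS j (by omega) (by omega) (by omega))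
      have hx : ((⟨0 + x.1, by omega⟩ : Fin n)) = x := Fin.ext (show 0 + x.1 = x.1 by omega)
      rw [← hx]
      exact hc
  refine ⟨?_, hsep, hcov⟩
  -- the forest property
  intro e he x y hends
  have hsub : ∀ e' : Fin n ⊕ Unit, e' ∉ (↑S : Set (Fin n ⊕ Unit)) →
      e' ∉ ((↑S : Set (Fin n ⊕ Unit)) \ {e}) := fun e' h hmem => h hmem.1
  rcases e with j | u
  · -- cycle edge
    replace he := (hmemS _).mp he
    obtain ⟨he1, he2, he3⟩ := he
    have hjp : j.1 ≠ p := fun hh => he1 (congrArg Sum.inl (Fin.ext hh))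
    have hja : bb = true → j.1 ≠ a := by
      intro hbt hh
      rw [hbt] at he3
      simp only [if_true] at he3
      exact he3 (congrArg Sum.inl (Fin.ext hh))
    -- slot j.1 is cut in S \ {inl j}
    have c1 : Sum.inl (⟨j.1, j.isLt⟩ : Fin n) ∉ ((↑S : Set (Fin n ⊕ Unit)) \ {Sum.inl j}) := by
      intro hmem
      exact hmem.2 (by exact congrArg Sum.inl (Fin.ext rfl))
    have c2 : j.1 = a → Sum.inr () ∉ ((↑S : Set (Fin n ⊕ Unit)) \ {Sum.inl j}) := by
      intro hja' hmem
      have hbf : bb = false := by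
        cases bb with
        | false => rfl
        | true => exact absurd hja' (hja rfl)
      have hm := hmem.1
      rw [Finset.mem_coe, hmemS] at hm
      rcases hm with ⟨-, -, hm3⟩
      rw [hbf] at hm3
      simp at hm3
    have key : ∀ x' y' : Fin n, x'.1 = j.1 → y'.1 = (j.1 + 1) % n →
        ¬ (cycleChord n a (a+1) hn ha hb).Reach ((↑S : Set (Fin n ⊕ Unit)) \ {Sum.inl j}) x' y' := by
      intro x' y' hx' hy'
      rcases Nat.lt_or_ge j.1 p with hc | hc
      · exact cyc_no_adj n a (a+1) hn ha hb rfl _ j.1 p hc hpn c1 c2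
          (hsub _ hcut_p1) (fun h => hsub _ (hcut_p2 h)) j.1 (Or.inl rfl) x' y' hx' hy'
      · have hc' : p < j.1 := by omega
        exact cyc_no_adj n a (a+1) hn ha hb rfl _ p j.1 hc' j.isLt
          (hsub _ hcut_p1) (fun h => hsub _ (hcut_p2 h)) c1 c2 j.1 (Or.inr rfl) x' y' hx' hy'
    rw [ends_inl n a (a+1) hn ha hb j] at hends
    replace hends := Sym2.eq_iff.mp hends
    rcases hends with ⟨h1, h2⟩ | ⟨h1, h2⟩
    · exact key x y (congrArg Fin.val h1).symm (congrArg Fin.val h2).symm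
    · intro h
      exact key y x (congrArg Fin.val h1).symm (congrArg Fin.val h2).symm (reach_symm_s4 h)
  · -- the chord
    cases u
    replace he := (hmemS _).mp he
    obtain ⟨-, -, he3⟩ := he
    have hbt : bb = true := by
      cases bb with
      | false => simp at he3
      | true => rfl
    have hpa : p ≠ a := hbb hbt
    have ca1 : Sum.inl (⟨a, ha⟩ : Fin n) ∉ ((↑S : Set (Fin n ⊕ Unit)) \ {Sum.inr ()}) := by
      apply hsub
      simp [Finset.mem_coe, hmemS, hbt]
    have ca2 : a = a → Sum.inr () ∉ ((↑S : Set (Fin n ⊕ Unit)) \ {Sum.inr ()}) := by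
      intro _ hmem
      exact hmem.2 rfl
    have key : ∀ x' y' : Fin n, x'.1 = a → y'.1 = (a + 1) % n →
        ¬ (cycleChord n a (a+1) hn ha hb).Reach ((↑S : Set (Fin n ⊕ Unit)) \ {Sum.inr ()}) x' y' := by
      intro x' y' hx' hy'
      rcases Nat.lt_or_ge a p with hc | hc
      · exact cyc_no_adj n a (a+1) hn ha hb rfl _ a p hc hpn ca1 ca2
          (hsub _ hcut_p1) (fun h => hsub _ (hcut_p2 h)) a (Or.inl rfl) x' y' hx' hy'
      · have hc' : p < a := by omega
        exact cyc_no_adj n a (a+1) hn ha hb rfl _ p a hc' ha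
          (hsub _ hcut_p1) (fun h => hsub _ (hcut_p2 h)) ca1 ca2 a (Or.inr rfl) x' y' hx' hy'
    have hmod : (a + 1) % n = a + 1 := Nat.mod_eq_of_lt hb
    rw [ends_inr n a (a+1) hn ha hb] at hends
    replace hends := Sym2.eq_iff.mp hends
    rcases hends with ⟨h1, h2⟩ | ⟨h1, h2⟩
    · exact key x y (congrArg Fin.val h1).symm (by rw [hmod]; exact (congrArg Fin.val h2).symm)
    · intro h
      exact key y x (congrArg Fin.val h1).symm (by rw [hmod]; exact (congrArg Fin.val h2).symm)
        (reach_symm_s4 h)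

private lemma twoForest_exists_rep (n t a b : ℕ) (hn : 0 < n) (ha : a < n) (hb : b < n)
    (hab : b = a + 1) (ht3 : 3 ≤ t) (htn : 2 * t ≤ n + 1) (hat : a ≤ t - 2)
    (S : Finset (Fin n ⊕ Unit))
    (hS : (cycleChord n a b hn ha hb).IsTwoForest ⟨0, by omega⟩ ⟨t - 1, by omega⟩ S) :
    ∃ p q bb, ∃ (_ : p ≤ t - 2) (_ : t - 1 ≤ q) (h3 : q < n) (_ : bb = true → p ≠ a),
      S = goodS n a p q ha (by omega) h3 bb := by
  obtain ⟨hforest, hsep, hcov⟩ := hS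
  subst hab
  classical
  -- a non-cut slot gives a step
  have hstep' : ∀ j : ℕ, ∀ hj : j + 1 < n,
      (Sum.inl (⟨j, by omega⟩ : Fin n) ∈ S ∨ (j = a ∧ Sum.inr () ∈ S)) →
      ∃ e ∈ (↑S : Set (Fin n ⊕ Unit)), (cycleChord n a (a+1) hn ha hb).ends e =
        s((⟨j, by omega⟩ : Fin n), (⟨j + 1, hj⟩ : Fin n)) := by
    intro j hj h
    have hfin : (⟨(j + 1) % n, Nat.mod_lt _ hn⟩ : Fin n) = (⟨j + 1, hj⟩ : Fin n) :=
      Fin.ext (Nat.mod_eq_of_lt hj)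
    rcases h with h | ⟨rfl, h⟩
    · exact ⟨_, h, by rw [ends_inl' n a (a+1) hn ha hb j (by omega), hfin]⟩
    · exact ⟨Sum.inr (), h, rfl⟩
  have hncstep : ∀ j : ℕ, ∀ hj : j + 1 < n,
      ¬(Sum.inl (⟨j, by omega⟩ : Fin n) ∉ S ∧ (j = a → Sum.inr () ∉ S)) →
      ∃ e ∈ (↑S : Set (Fin n ⊕ Unit)), (cycleChord n a (a+1) hn ha hb).ends e =
        s((⟨j, by omega⟩ : Fin n), (⟨j + 1, hj⟩ : Fin n)) := by
    intro j hj h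
    refine hstep' j hj ?_
    by_cases hmem : Sum.inl (⟨j, by omega⟩ : Fin n) ∈ S
    · exact Or.inl hmem
    · push_neg at h
      exact Or.inr (h hmem)
  -- the wrap-around step
  have hwstep : ¬(Sum.inl (⟨n - 1, by omega⟩ : Fin n) ∉ S ∧ (n - 1 = a → Sum.inr () ∉ S)) →
      ∃ e ∈ (↑S : Set (Fin n ⊕ Unit)), (cycleChord n a (a+1) hn ha hb).ends e =
        s((⟨n - 1, by omega⟩ : Fin n), (⟨0, by omega⟩ : Fin n)) := by
    intro h
    have hna : n - 1 ≠ a := by omega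
    have h1 : Sum.inl (⟨n - 1, by omega⟩ : Fin n) ∈ S := by
      by_cases hmem : Sum.inl (⟨n - 1, by omega⟩ : Fin n) ∈ S
      · exact hmem
      · push_neg at h
        exact absurd (h hmem).1 hna
    have hfin : (⟨(n - 1 + 1) % n, Nat.mod_lt _ hn⟩ : Fin n) = (⟨0, by omega⟩ : Fin n) := by
      refine Fin.ext ?_
      show (n - 1 + 1) % n = 0
      rw [show n - 1 + 1 = n from by omega, Nat.mod_self]
    exact ⟨_, h1, by rw [ends_inl' n a (a+1) hn ha hb (n-1) (by omega), hfin]⟩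
  -- existence of a cut slot in [0, t-2]
  have hex_p : ∃ pp : Fin n, pp.1 < t - 1 ∧ Sum.inl pp ∉ S ∧ (pp.1 = a → Sum.inr () ∉ S) := by
    by_contra hno
    apply hsep
    have hreach := cyc_chain n a (a+1) hn ha hb ↑S 0 (t-1) (by omega)
      (fun j h1 h2 => hncstep j (by omega)
        (fun hc => hno ⟨⟨j, by omega⟩, (show j < t - 1 by omega), hc.1, hc.2⟩))
    have he : ((⟨0 + (t-1), by omega⟩ : Fin n)) = (⟨t-1, by omega⟩ : Fin n) :=
      Fin.ext (show 0 + (t-1) = t-1 by omega)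
    rw [he] at hreach
    exact hreach
  -- existence of a cut slot in [t-1, n-1]
  have hex_q : ∃ qq : Fin n, t - 1 ≤ qq.1 ∧ Sum.inl qq ∉ S ∧ (qq.1 = a → Sum.inr () ∉ S) := by
    by_contra hno
    apply hsep
    have hreach := cyc_chain n a (a+1) hn ha hb ↑S (t-1) (n - 1 - (t-1)) (by omega)
      (fun j h1 h2 => hncstep j (by omega)
        (fun hc => hno ⟨⟨j, by omega⟩, (show t - 1 ≤ j from h1), hc.1, hc.2⟩))
    have he : ((⟨t - 1 + (n - 1 - (t-1)), by omega⟩ : Fin n)) = (⟨n - 1, by omega⟩ : Fin n) :=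
      Fin.ext (show t - 1 + (n - 1 - (t-1)) = n - 1 by omega)
    rw [he] at hreach
    have hw := hwstep (fun hc => hno ⟨⟨n - 1, by omega⟩, (show t - 1 ≤ n - 1 by omega), hc.1, hc.2⟩)
    exact reach_symm_s4 (Relation.ReflTransGen.tail hreach hw)
  obtain ⟨P, hPlt, hPm, hPa⟩ := hex_p
  obtain ⟨Q, hQge, hQm, hQa⟩ := hex_q
  have hPQ : P.1 < Q.1 := by omega
  -- invariant wrapper
  have ninv : ∀ (A B : ℕ) (hAB : A < B) (hBn : B < n),
      Sum.inl (⟨A, by omega⟩ : Fin n) ∉ S → (A = a → Sum.inr () ∉ S) →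
      Sum.inl (⟨B, hBn⟩ : Fin n) ∉ S → (B = a → Sum.inr () ∉ S) →
      ∀ x y : Fin n, (cycleChord n a (a+1) hn ha hb).Reach (↑S : Set (Fin n ⊕ Unit)) x y →
        ((A < x.1 ∧ x.1 ≤ B) ↔ (A < y.1 ∧ y.1 ≤ B)) :=
    fun A B hAB hBn h1 h2 h3 h4 x y h =>
      cyc_inv n a (a+1) hn ha hb rfl ↑S A B hAB hBn h1 h2 h3 h4 h
  -- P and Q are the only cut slots
  have honly : ∀ r : Fin n, Sum.inl r ∉ S → (r.1 = a → Sum.inr () ∉ S) →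
      r.1 = P.1 ∨ r.1 = Q.1 := by
    intro r hr1 hr2
    by_contra hne
    push_neg at hne
    obtain ⟨hne1, hne2⟩ := hne
    rcases Nat.lt_trichotomy r.1 P.1 with hcase | hcase | hcase
    · rcases hcov P with hR | hR
      · have H' : ((r.1 < 0 ∧ 0 ≤ P.1) ↔ (r.1 < P.1 ∧ P.1 ≤ P.1)) :=
          ninv r.1 P.1 hcase P.isLt hr1 hr2 hPm hPa _ _ hR
        omega
      · have H' : ((P.1 < t - 1 ∧ t - 1 ≤ Q.1) ↔ (P.1 < P.1 ∧ P.1 ≤ Q.1)) :=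
          ninv P.1 Q.1 hPQ Q.isLt hPm hPa hQm hQa _ _ hR
        omega
    · exact hne1 hcase
    · rcases Nat.lt_trichotomy r.1 Q.1 with hc2 | hc2 | hc2
      · by_cases hc3 : r.1 < t - 1
        · rcases hcov r with hR | hR
          · have H' : ((P.1 < 0 ∧ 0 ≤ r.1) ↔ (P.1 < r.1 ∧ r.1 ≤ r.1)) :=
              ninv P.1 r.1 hcase r.isLt hPm hPa hr1 hr2 _ _ hR
            omega
          · have H' : ((r.1 < t - 1 ∧ t - 1 ≤ Q.1) ↔ (r.1 < r.1 ∧ r.1 ≤ Q.1)) :=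
              ninv r.1 Q.1 hc2 Q.isLt hr1 hr2 hQm hQa _ _ hR
            omega
        · rcases hcov Q with hR | hR
          · have H' : ((r.1 < 0 ∧ 0 ≤ Q.1) ↔ (r.1 < Q.1 ∧ Q.1 ≤ Q.1)) :=
              ninv r.1 Q.1 hc2 Q.isLt hr1 hr2 hQm hQa _ _ hR
            omega
          · have H' : ((r.1 < t - 1 ∧ t - 1 ≤ Q.1) ↔ (r.1 < Q.1 ∧ Q.1 ≤ Q.1)) :=
              ninv r.1 Q.1 hc2 Q.isLt hr1 hr2 hQm hQa _ _ hR
            omega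
      · exact hne2 hc2
      · rcases hcov r with hR | hR
        · have H' : ((Q.1 < 0 ∧ 0 ≤ r.1) ↔ (Q.1 < r.1 ∧ r.1 ≤ r.1)) :=
            ninv Q.1 r.1 hc2 r.isLt hQm hQa hr1 hr2 _ _ hR
          omega
        · have H' : ((Q.1 < t - 1 ∧ t - 1 ≤ r.1) ↔ (Q.1 < r.1 ∧ r.1 ≤ r.1)) :=
            ninv Q.1 r.1 hc2 r.isLt hQm hQa hr1 hr2 _ _ hR
          omega
  -- the two parallel edges cannot both be present
  have hpar : ¬(Sum.inl (⟨a, ha⟩ : Fin n) ∈ S ∧ Sum.inr () ∈ S) := by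
    rintro ⟨h1, h2⟩
    apply hforest (Sum.inr ()) h2 ⟨a, ha⟩ ⟨a+1, hb⟩ rfl
    have hfin : (⟨(a + 1) % n, Nat.mod_lt _ hn⟩ : Fin n) = (⟨a + 1, hb⟩ : Fin n) :=
      Fin.ext (Nat.mod_eq_of_lt hb)
    refine Relation.ReflTransGen.single ⟨Sum.inl ⟨a, ha⟩, ⟨h1, by intro hh; cases hh⟩, ?_⟩
    rw [ends_inl' n a (a+1) hn ha hb a ha, hfin]
    rfl
  -- assemble
  by_cases hinr : Sum.inr () ∈ S
  · refine ⟨P.1, Q.1, true, by omega, by omega, Q.isLt, fun _ hPa' => hPa hPa' hinr, ?_⟩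
    ext e
    simp only [goodS, Finset.mem_sdiff, Finset.mem_univ, true_and, Finset.mem_insert,
      Finset.mem_singleton, if_true]
    constructor
    · intro heS
      rintro (rfl | rfl | rfl)
      · exact hPm heS
      · exact hQm heS
      · exact hpar ⟨heS, hinr⟩
    · intro h
      rcases e with j | u
      · by_contra hnot
        by_cases hja : j.1 = a
        · exact h (Or.inr (Or.inr (congrArg Sum.inl (Fin.ext hja))))
        · rcases honly j hnot (fun hja' => absurd hja' hja) with hj | hj
          · exact h (Or.inl (congrArg Sum.inl (Fin.ext hj)))
          · exact h (Or.inr (Or.inl (congrArg Sum.inl (Fin.ext hj))))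
      · cases u; exact hinr
  · refine ⟨P.1, Q.1, false, by omega, by omega, Q.isLt, fun h => absurd h (by simp), ?_⟩
    ext e
    simp only [goodS, Finset.mem_sdiff, Finset.mem_univ, true_and, Finset.mem_insert,
      Finset.mem_singleton, if_false]
    constructor
    · intro heS
      rintro (rfl | rfl | rfl)
      · exact hPm heS
      · exact hQm heS
      · exact hinr heS
    · intro h
      rcases e with j | u
      · by_contra hnot
        rcases honly j hnot (fun _ => hinr) with hj | hj
        · exact h (Or.inl (congrArg Sum.inl (Fin.ext hj)))
        · exact h (Or.inr (Or.inl (congrArg Sum.inl (Fin.ext hj))))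
      · cases u; exact absurd (Or.inr (Or.inr rfl)) h

private lemma goodS_inj (n t a : ℕ) (ha : a < n) (ht3 : 3 ≤ t) (hat : a ≤ t - 2)
    {p q p' q' : ℕ} {hp : p < n} {hq : q < n} {hp' : p' < n} {hq' : q' < n} {bb bb' : Bool}
    (h1 : p ≤ t - 2) (h2 : t - 1 ≤ q) (h1' : p' ≤ t - 2) (h2' : t - 1 ≤ q')
    (hbp : bb = true → p ≠ a) (hbp' : bb' = true → p' ≠ a)
    (h : goodS n a p q ha hp hq bb = goodS n a p' q' ha hp' hq' bb') :
    p = p' ∧ q = q' ∧ bb = bb' := by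
  have hmem := fun e => Finset.ext_iff.mp h e
  have hbbeq : bb = bb' := by
    cases bb <;> cases bb' <;>
      first
        | rfl
        | (exfalso; have := hmem (Sum.inr ()); simp [goodS] at this)
  subst hbbeq
  have hLq : Sum.inl (⟨q, hq⟩ : Fin n) ∉ goodS n a p q ha hp hq bb := by simp [goodS]
  rw [h] at hLq
  have hLp : Sum.inl (⟨p, hp⟩ : Fin n) ∉ goodS n a p q ha hp hq bb := by simp [goodS]
  rw [h] at hLp
  cases bb with
  | false =>
    simp only [goodS, Finset.mem_sdiff, Finset.mem_univ, true_and, Finset.mem_insert,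
      Finset.mem_singleton, if_false, not_not, Sum.inl.injEq, Fin.mk.injEq] at hLq hLp
    refine ⟨?_, ?_, rfl⟩
    · rcases hLp with h | h | h
      · exact h
      · omega
      · simp at h
    · rcases hLq with h | h | h
      · omega
      · exact h
      · simp at h
  | true =>
    simp only [goodS, Finset.mem_sdiff, Finset.mem_univ, true_and, Finset.mem_insert,
      Finset.mem_singleton, if_true, not_not, Sum.inl.injEq, Fin.mk.injEq] at hLq hLp
    have hpa : p ≠ a := hbp rfl
    refine ⟨?_, ?_, rfl⟩
    · rcases hLp with h | h | h
      · exact h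
      · omega
      · omega
    · rcases hLq with h | h | h
      · omega
      · exact h
      · omega

private lemma main_count (n t a b : ℕ) (hn : 0 < n) (ha : a < n) (hb : b < n)
    (hu : 0 < n) (hv : t - 1 < n)
    (hab : b = a + 1) (ht3 : 3 ≤ t) (htn : 2 * t ≤ n + 1) (hat : a ≤ t - 2) :
    (cycleChord n a b hn ha hb).twoForestCount ⟨0, hu⟩ ⟨t - 1, hv⟩ =
      (2 * t - 3) * (n - t + 1) := by
  classical
  have htln : t ≤ n := by omega
  -- the index finset
  set A : Finset ((ℕ × ℕ) × Bool) :=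
    ((Finset.range (t-1) ×ˢ Finset.Ico (t-1) n) ×ˢ {false}) ∪
    ((((Finset.range (t-1)).erase a) ×ˢ Finset.Ico (t-1) n) ×ˢ {true}) with hA
  have hmemA : ∀ x : (ℕ × ℕ) × Bool, x ∈ A ↔
      (x.1.1 < t - 1 ∧ t - 1 ≤ x.1.2 ∧ x.1.2 < n ∧ (x.2 = true → x.1.1 ≠ a)) := by
    intro x
    obtain ⟨⟨xp, xq⟩, xb⟩ := x
    simp only [hA, Finset.mem_union, Finset.mem_product, Finset.mem_range, Finset.mem_Ico,
      Finset.mem_erase, Finset.mem_singleton]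
    cases xb <;> simp <;> tauto
  have hcardA : A.card = (2 * t - 3) * (n - t + 1) := by
    have hdisj : Disjoint
        ((Finset.range (t-1) ×ˢ Finset.Ico (t-1) n) ×ˢ ({false} : Finset Bool))
        ((((Finset.range (t-1)).erase a) ×ˢ Finset.Ico (t-1) n) ×ˢ ({true} : Finset Bool)) := by
      rw [Finset.disjoint_left]
      rintro ⟨⟨xp, xq⟩, xb⟩ hx1 hx2
      simp only [Finset.mem_product, Finset.mem_singleton] at hx1 hx2
      rw [hx1.2] at hx2
      exact absurd hx2.2 (by simp)
    rw [hA, Finset.card_union_of_disjoint hdisj]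
    simp only [Finset.card_product, Finset.card_singleton, Finset.card_range, Nat.card_Ico,
      Finset.card_erase_of_mem (show a ∈ Finset.range (t-1) by simp; omega)]
    have e1 : n - (t-1) = n - t + 1 := by omega
    have e2 : t - 1 - 1 = t - 2 := by omega
    rw [e1, e2, Nat.mul_one, Nat.mul_one, ← Nat.add_mul,
      show t - 1 + (t - 2) = 2 * t - 3 from by omega]
  unfold Multigraph.twoForestCount
  rw [← hcardA]
  have hAcard : Nat.card {x : (ℕ × ℕ) × Bool // x ∈ A} = A.card := by
    rw [Nat.card_eq_fintype_card]
    exact Fintype.card_coe A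
  rw [← hAcard]
  let f : {x : (ℕ × ℕ) × Bool // x ∈ A} →
      {S : Finset (Fin n ⊕ Unit) //
        (cycleChord n a b hn ha hb).IsTwoForest ⟨0, hu⟩ ⟨t - 1, hv⟩ S} :=
    fun x => ⟨goodS n a x.1.1.1 x.1.1.2 ha
        (by have := (hmemA x.1).mp x.2; omega)
        (by have := (hmemA x.1).mp x.2; omega) x.1.2,
      by
        have hx := (hmemA x.1).mp x.2
        exact goodS_isTwoForest n t a b hn ha hb hab ht3 htn hat
          x.1.1.1 x.1.1.2 (by omega) (by omega) hx.2.1 hx.2.2.1 x.1.2 hx.2.2.2⟩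
  have hbij : Function.Bijective f := by
    constructor
    · rintro ⟨x, hx⟩ ⟨y, hy⟩ hxy
      have hval := congrArg Subtype.val hxy
      have hx' := (hmemA x).mp hx
      have hy' := (hmemA y).mp hy
      have hinj := goodS_inj n t a ha ht3 hat
        (p := x.1.1) (q := x.1.2) (p' := y.1.1) (q' := y.1.2)
        (by omega) hx'.2.1 (by omega) hy'.2.1 hx'.2.2.2 hy'.2.2.2 hval
      apply Subtype.ext
      exact Prod.ext (Prod.ext hinj.1 hinj.2.1) hinj.2.2
    · rintro ⟨S, hS⟩
      obtain ⟨p, q, bb, h1, h2, h3, h4, hSeq⟩ :=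
        twoForest_exists_rep n t a b hn ha hb hab ht3 htn hat S hS
      refine ⟨⟨((p, q), bb), (hmemA _).mpr ⟨show p < t - 1 by omega, h2, h3, h4⟩⟩, ?_⟩
      apply Subtype.ext
      exact hSeq.symm
  exact (Nat.card_congr (Equiv.ofBijective f hbij)).symm

/-- Adding a chord between adjacent cycle vertices `v_i, v_{i+1}` with `1 ≤ i < t`,
`3 ≤ t ≤ ⌈n/2⌉` and `(i, t) ≠ (1, 2)`: the number of spanning 2-forests separating
`v₁` and `v_t` equals `(2t - 3)(n - t + 1)`. -/
theorem stmt_4 (n t i : ℕ) (ht3 : 3 ≤ t) (ht : t ≤ (n + 1) / 2)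
    (hi1 : 1 ≤ i) (hit : i < t) (hne : ¬(i = 1 ∧ t = 2)) :
    (cycleChord n (i - 1) i (by omega) (by omega) (by omega)).twoForestCount
        ⟨0, by omega⟩ ⟨t - 1, by omega⟩ =
      (2 * t - 3) * (n - t + 1) := by
  exact main_count n t (i - 1) i (by omega) (by omega) (by omega) (by omega) (by omega)
    (by omega) ht3 (by omega) (by omega)
end

section
/- For every integer n ≥ 2, the identity ∑_{i=1}^{n−1} C(n−2, i−1) · i^{i−2} · (n−i)^{n−i−2} = 2 n^{n−3} holds, where the terms with i = 1 or i = n−1 are interpreted with 1^{−1} = 1 (i.e. the factor i^{i−2} equals 1 when i = 1). Equivalently, n² · ∑_{i=1}^{n−1} C(n−2, i−1) i^{i−2} (n−i)^{n−i−2} = 2 n^{n−1}. -/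
open Finset

namespace Stmt8Aux

/-- `g x 0 = 1`, `g x (k+1) = x*(x+k+1)^k`; this is `x*(x+k)^(k-1)` with the
convention `x*x^{-1} = 1` at `k = 0`. -/
def g (x : ℕ) : ℕ → ℕ
  | 0 => 1
  | (k+1) => x * (x + (k+1)) ^ k

/-- Hurwitz sum. -/
def A (n x y : ℕ) : ℕ := ∑ k ∈ range (n+1), n.choose k * g x k * (y + (n - k)) ^ (n - k)

/-- Cauchy sum. -/
def Q (n x y : ℕ) : ℕ := ∑ k ∈ range (n+1), n.choose k * (x + k) ^ k * (y + (n - k)) ^ (n - k)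

lemma g_mul (x k : ℕ) : g x k * (x + k) = x * (x + k) ^ k := by
  cases k with
  | zero => simp [g]
  | succ j => simp only [g, pow_succ]; ring

lemma pow_eq_g_add (x k : ℕ) : (x + k) ^ k = g x k + k * (x + k) ^ (k - 1) := by
  cases k with
  | zero => simp [g]
  | succ j =>
    simp only [g, Nat.add_sub_cancel]
    have : (x + (j+1)) ^ (j+1) = (x + (j+1)) ^ j * (x + (j+1)) := pow_succ _ _
    rw [this]; ring

lemma Qstar (m x y : ℕ) : Q (m+1) x y = A (m+1) x y + (m+1) * Q m (x+1) y := by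
  unfold Q A
  have h1 : ∀ k ∈ range (m+2),
      (m+1).choose k * (x + k) ^ k * (y + (m+1 - k)) ^ (m+1 - k)
      = (m+1).choose k * g x k * (y + (m+1 - k)) ^ (m+1 - k)
        + (m+1).choose k * (k * (x + k) ^ (k - 1)) * (y + (m+1 - k)) ^ (m+1 - k) := by
    intro k _
    rw [pow_eq_g_add]; ring
  rw [Finset.sum_congr rfl h1, Finset.sum_add_distrib]
  congr 1
  rw [Finset.sum_range_succ']
  simp only [Nat.add_sub_add_right, Nat.add_sub_cancel, Nat.zero_sub, Nat.mul_zero,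
    Nat.zero_mul, mul_zero, zero_mul, pow_zero, add_zero]
  rw [Finset.mul_sum]
  apply Finset.sum_congr rfl
  intro i _
  have hc : (m+1).choose (i+1) * (i+1) = (m+1) * m.choose i :=
    (Nat.add_one_mul_choose_eq m i).symm
  have hb : x + (i+1) = (x+1) + i := by ring
  calc (m+1).choose (i+1) * ((i+1) * (x + (i+1)) ^ i) * (y + (m - i)) ^ (m - i)
      = ((m+1).choose (i+1) * (i+1)) * ((x + (i+1)) ^ i * (y + (m - i)) ^ (m - i)) := by ring
    _ = ((m+1) * m.choose i) * (((x+1) + i) ^ i * (y + (m - i)) ^ (m - i)) := by rw [hc, hb]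
    _ = (m+1) * (m.choose i * ((x+1) + i) ^ i * (y + (m - i)) ^ (m - i)) := by ring

lemma AQ : ∀ n : ℕ, (∀ x y, A n x y = (x + y + n) ^ n) ∧ (∀ x y, Q n (x+1) y = Q n x (y+1)) := by
  intro n
  induction n with
  | zero => constructor <;> intro x y <;> simp [A, Q, g]
  | succ n ih =>
    obtain ⟨hA, hS⟩ := ih
    have hA' : ∀ x y, A (n+1) x y = (x + y + (n+1)) ^ (n+1) := by
      intro x y
      have key1 : A (n+1) x y
          = x * Q n (x+1) y
            + ∑ k ∈ range (n+1), n.choose k * g x k * ((y+1) + (n - k)) ^ ((n - k) + 1) := by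
        unfold A Q
        rw [Finset.sum_range_succ']
        have h2 : ∀ i ∈ range (n+1),
            (n+1).choose (i+1) * g x (i+1) * (y + (n+1 - (i+1))) ^ (n+1 - (i+1))
            = x * (n.choose i * ((x+1) + i) ^ i * (y + (n - i)) ^ (n - i))
              + n.choose (i+1) * g x (i+1) * (y + (n - i)) ^ (n - i) := by
          intro i _
          have hcs : (n+1).choose (i+1) = n.choose i + n.choose (i+1) :=
            Nat.choose_succ_succ n i
          have hsub : n+1 - (i+1) = n - i := by omega
          have hg : g x (i+1) = x * ((x+1) + i) ^ i := by
            simp only [g]; congr 2; ring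
          rw [hsub, hcs, hg]; ring
        rw [Finset.sum_congr rfl h2, Finset.sum_add_distrib, ← Finset.mul_sum]
        have h3 : ((∑ i ∈ range (n+1), n.choose (i+1) * g x (i+1) * (y + (n - i)) ^ (n - i))
              + (n+1).choose 0 * g x 0 * (y + (n+1 - 0)) ^ (n+1 - 0))
            = ∑ k ∈ range (n+1), n.choose k * g x k * ((y+1) + (n - k)) ^ ((n - k) + 1) := by
          have h4 : ((∑ i ∈ range (n+1), n.choose (i+1) * g x (i+1) * (y + (n - i)) ^ (n - i))
                + n.choose 0 * g x 0 * (y + (n+1 - 0)) ^ (n+1 - 0))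
              = ∑ k ∈ range (n+2), n.choose k * g x k * (y + (n+1 - k)) ^ (n+1 - k) := by
            conv_rhs => rw [Finset.sum_range_succ']
            congr 1
            apply Finset.sum_congr rfl
            intro i _
            congr 2 <;> omega
          simp only [Nat.choose_zero_right] at h4 ⊢
          rw [h4, Finset.sum_range_succ]
          simp only [Nat.choose_succ_self, zero_mul, add_zero]
          apply Finset.sum_congr rfl
          intro k hk
          have hk' : k ≤ n := Nat.lt_succ_iff.mp (Finset.mem_range.mp hk)
          congr 2 <;> omega
        rw [add_assoc, h3]
      have key2 : (x + y + (n+1)) * A n x (y+1)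
          = x * Q n x (y+1)
            + ∑ k ∈ range (n+1), n.choose k * g x k * ((y+1) + (n - k)) ^ ((n - k) + 1) := by
        unfold A Q
        rw [Finset.mul_sum, Finset.mul_sum, ← Finset.sum_add_distrib]
        apply Finset.sum_congr rfl
        intro k hk
        have hk' : k ≤ n := Nat.lt_succ_iff.mp (Finset.mem_range.mp hk)
        have hsplit : x + y + (n+1) = (x + k) + ((y+1) + (n - k)) := by omega
        rw [hsplit, add_mul]
        congr 1
        · calc (x + k) * (n.choose k * g x k * ((y+1) + (n - k)) ^ (n - k))
              = n.choose k * (g x k * (x + k)) * ((y+1) + (n - k)) ^ (n - k) := by ring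
            _ = n.choose k * (x * (x + k) ^ k) * ((y+1) + (n - k)) ^ (n - k) := by rw [g_mul]
            _ = x * (n.choose k * (x + k) ^ k * ((y+1) + (n - k)) ^ (n - k)) := by ring
        · rw [pow_succ]; ring
      rw [key1, hS, ← key2, hA]
      have : x + (y+1) + n = x + y + (n+1) := by ring
      rw [this, ← pow_succ']
    refine ⟨hA', ?_⟩
    intro x y
    rw [Qstar, Qstar, hA' (x+1) y, hA' x (y+1), hS (x+1) y]
    congr 2
    omega

lemma g_one_succ (j : ℕ) : (1 + j) ^ j = (1 + j) * g 1 j := by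
  cases j with
  | zero => simp [g]
  | succ i => simp only [g, one_mul, pow_succ]; ring

lemma Blem (t : ℕ) :
    ∑ k ∈ range (t+2), (t+1).choose k * g 1 k * g 1 (t+1 - k) = 2 * (t+3) ^ t := by
  have hA1 : A (t+1) 1 1 = (t+3) ^ (t+1) := by
    have := (AQ (t+1)).1 1 1
    rwa [show (1 : ℕ) + 1 + (t+1) = t+3 by ring] at this
  have hA2 : A t 1 2 = (t+3) ^ t := by
    have := (AQ t).1 1 2
    rwa [show (1 : ℕ) + 2 + t = t+3 by ring] at this
  have expand : A (t+1) 1 1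
      = (∑ k ∈ range (t+2), (t+1).choose k * g 1 k * g 1 (t+1 - k))
        + ∑ k ∈ range (t+2), ((t+1).choose k * (t+1 - k)) * (g 1 k * g 1 (t+1 - k)) := by
    unfold A
    rw [← Finset.sum_add_distrib]
    apply Finset.sum_congr rfl
    intro k _
    rw [g_one_succ (t+1-k)]
    ring
  have second : (∑ k ∈ range (t+2), ((t+1).choose k * (t+1 - k)) * (g 1 k * g 1 (t+1 - k)))
      = (t+1) * A t 1 2 := by
    unfold A
    rw [Finset.sum_range_succ]
    simp only [Nat.sub_self, Nat.mul_zero, mul_zero, zero_mul, add_zero]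
    rw [Finset.mul_sum]
    apply Finset.sum_congr rfl
    intro k hk
    have hk' : k ≤ t := Nat.lt_succ_iff.mp (Finset.mem_range.mp hk)
    have hc : (t+1).choose k * (t+1 - k) = (t+1) * t.choose k := by
      have h1 : (t+1).choose k = (t+1).choose (t+1 - k) := by
        rw [Nat.choose_symm (by omega)]
      have h2 : (t+1) * t.choose (t - k) = (t+1).choose ((t - k) + 1) * ((t - k) + 1) :=
        Nat.add_one_mul_choose_eq t (t - k)
      have h3 : t.choose (t - k) = t.choose k := Nat.choose_symm hk'
      have h4 : t + 1 - k = (t - k) + 1 := by omega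
      rw [h1, h4, ← h2, h3]
    have hg : g 1 (t+1 - k) = (2 + (t - k)) ^ (t - k) := by
      have h4 : t + 1 - k = (t - k) + 1 := by omega
      rw [h4]
      simp only [g, one_mul]
      congr 1
      omega
    rw [hg]
    calc (t+1).choose k * (t+1 - k) * (g 1 k * (2 + (t - k)) ^ (t - k))
        = ((t+1).choose k * (t+1 - k)) * (g 1 k * (2 + (t - k)) ^ (t - k)) := by ring
      _ = ((t+1) * t.choose k) * (g 1 k * (2 + (t - k)) ^ (t - k)) := by rw [hc]
      _ = (t+1) * (t.choose k * g 1 k * (2 + (t - k)) ^ (t - k)) := by ring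
  have main : (∑ k ∈ range (t+2), (t+1).choose k * g 1 k * g 1 (t+1 - k)) + (t+1) * (t+3) ^ t
      = (t+3) ^ (t+1) := by
    rw [← hA1, expand, second, hA2]
  have h5 : (∑ k ∈ range (t+2), (t+1).choose k * g 1 k * g 1 (t+1 - k)) + (t+1) * (t+3) ^ t
      = 2 * (t+3) ^ t + (t+1) * (t+3) ^ t := by
    rw [main, pow_succ]; ring
  exact Nat.add_right_cancel h5

lemma g_one_eq (s : ℕ) : g 1 s = (s + 1) ^ (s - 1) := by
  cases s with
  | zero => simp [g]
  | succ i => simp only [g, one_mul, Nat.add_sub_cancel]; congr 1; ring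

end Stmt8Aux

/-- For every `n ≥ 2`,
`∑_{i=1}^{n-1} C(n-2, i-1) · i^{i-2} · (n-i)^{n-i-2} = 2 n^{n-3}`, where the terms with
`i = 1` or `i = n - 1` use the convention `1^{-1} = 1` (encoded by truncated
natural-number subtraction in the exponents), stated in the equivalent form
`n² · ∑_{i=1}^{n-1} C(n-2, i-1) i^{i-2} (n-i)^{n-i-2} = 2 n^{n-1}`. -/
theorem stmt_8 (n : ℕ) (hn : 2 ≤ n) :
    n ^ 2 * ∑ i ∈ Finset.Icc 1 (n - 1),
        Nat.choose (n - 2) (i - 1) * i ^ (i - 2) * (n - i) ^ (n - i - 2) =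
      2 * n ^ (n - 1) := by
  rcases Nat.lt_or_ge n 3 with h3 | h3
  · interval_cases n
    decide
  · obtain ⟨t, rfl⟩ : ∃ t, n = t + 3 := ⟨n - 3, by omega⟩
    have hIcc : (t + 3 : ℕ) - 1 = t + 2 := by omega
    have hsub2 : (t + 3 : ℕ) - 2 = t + 1 := by omega
    rw [hIcc, hsub2, ← Finset.Ico_add_one_right_eq_Icc, Finset.sum_Ico_eq_sum_range]
    have hrange : t + 2 + 1 - 1 = t + 2 := by omega
    rw [hrange]
    have hsum : (∑ i ∈ Finset.range (t+2),
          (t+1).choose ((1 + i) - 1) * (1 + i) ^ ((1 + i) - 2)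
            * ((t + 3) - (1 + i)) ^ ((t + 3) - (1 + i) - 2))
        = ∑ k ∈ Finset.range (t+2), (t+1).choose k * Stmt8Aux.g 1 k * Stmt8Aux.g 1 (t+1 - k) := by
      apply Finset.sum_congr rfl
      intro i hi
      have hi' : i ≤ t + 1 := Nat.lt_succ_iff.mp (Finset.mem_range.mp hi)
      have e1 : (1 + i) - 1 = i := by omega
      have e2 : (1 + i) ^ ((1 + i) - 2) = Stmt8Aux.g 1 i := by
        rw [Stmt8Aux.g_one_eq]
        congr 1 <;> omega
      have e3 : ((t + 3) - (1 + i)) ^ ((t + 3) - (1 + i) - 2) = Stmt8Aux.g 1 (t+1 - i) := by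
        rw [Stmt8Aux.g_one_eq]
        congr 1 <;> omega
      rw [e1, e2, e3]
    rw [hsum, Stmt8Aux.Blem]
    ring
end

section
/- Let L₁ be a connected finite graph with one distinguished vertex w, and let L₂ be a connected finite graph with two distinguished vertices u₁, u₂. Let L be the graph obtained by gluing L₁ and L₂ along the identification w = u₁ (disjoint union of vertex sets modulo this identification, disjoint union of edge sets). Then the number of spanning 2-forests of L separating the two distinguished vertices of L equals κ(L₁) · F₂(L₂), where κ(L₁) is the number of spanning trees of L₁ and F₂(L₂) is the number of spanning 2-forests of L₂ separating u₁ and u₂. -/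
/-- The graph obtained by gluing `G` and `H` along the identification `w = u`:
vertex sets are joined disjointly modulo the identification, edge sets are joined
disjointly. -/
def glue1 (G H : Multigraph) (w : G.V) (u : H.V) : Multigraph where
  V := {x : G.V // x ≠ w} ⊕ H.V
  E := G.E ⊕ H.E
  ends := fun e =>
    match e with
    | .inl e => (G.ends e).map
        (fun x => if h : x = w then Sum.inr u else Sum.inl ⟨x, h⟩)
    | .inr e => (H.ends e).map Sum.inr

namespace GlueAux

open Relation Multigraph

variable (G H : Multigraph) (w : G.V) (u : H.V)

/-- The canonical embedding of the vertices of `G` into the glued graph. -/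
def ι : G.V → (glue1 G H w u).V :=
  fun x => if h : x = w then Sum.inr u else Sum.inl ⟨x, h⟩

/-- Projection of glued vertices to `G.V` (sending all of `H.V` to `w`). -/
def π₁ : (glue1 G H w u).V → G.V := Sum.elim Subtype.val fun _ => w

/-- Projection of glued vertices to `H.V` (sending all of `G`-side to `u`). -/
def π₂ : (glue1 G H w u).V → H.V := Sum.elim (fun _ => u) id

variable {G H w u}

lemma ends_inl (e : G.E) :
    (glue1 G H w u).ends (Sum.inl e) = (G.ends e).map (ι G H w u) := rfl

lemma ends_inr (e : H.E) :
    (glue1 G H w u).ends (Sum.inr e) = (H.ends e).map Sum.inr := rfl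

lemma π₁_ι (x : G.V) : π₁ G H w u (ι G H w u x) = x := by
  by_cases h : x = w <;> simp [ι, π₁, h]

lemma π₂_ι (x : G.V) : π₂ G H w u (ι G H w u x) = u := by
  by_cases h : x = w <;> simp [ι, π₂, h]

lemma π₁_inr (y : H.V) : π₁ G H w u (Sum.inr y) = w := rfl

lemma π₂_inr (y : H.V) : π₂ G H w u (Sum.inr y) = y := rfl

lemma ι_w : ι G H w u w = Sum.inr u := dif_pos rfl

lemma sym2_cases {α} (z : Sym2 α) : ∃ x y, z = s(x, y) := by
  induction z using Sym2.ind with | _ x y => exact ⟨x, y, rfl⟩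

section ReachLemmas

variable {K : Multigraph}

lemma reach_mono {T T' : Set K.E} (h : T ⊆ T') {x y : K.V} :
    K.Reach T x y → K.Reach T' x y :=
  ReflTransGen.mono (p := fun x y => ∃ e ∈ T', K.ends e = s(x, y))
    (fun _ _ ⟨e, he, hh⟩ => ⟨e, h he, hh⟩) _ _

lemma reach_symm {T : Set K.E} : Symmetric (K.Reach T) :=
  fun _ _ h => (@ReflTransGen.stdSymm _ (fun x y => ∃ e ∈ T, K.ends e = s(x, y))
    ⟨fun _ _ ⟨e, he, hh⟩ => ⟨e, he, by rw [hh, Sym2.eq_swap]⟩⟩).symm _ _ h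

end ReachLemmas

lemma lift₁ {T : Set G.E} {x y : G.V} (h : G.Reach T x y) :
    (glue1 G H w u).Reach (Sum.inl '' T) (ι G H w u x) (ι G H w u y) :=
  ReflTransGen.lift (ι G H w u)
    (fun a b ⟨e, he, hh⟩ =>
      ⟨Sum.inl e, ⟨e, he, rfl⟩, by rw [ends_inl, hh]; exact Sym2.map_pair_eq _ _ _⟩) _ _ h

lemma lift₂ {T : Set H.E} {x y : H.V} (h : H.Reach T x y) :
    (glue1 G H w u).Reach (Sum.inr '' T) (Sum.inr x) (Sum.inr y) :=
  ReflTransGen.lift Sum.inr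
    (fun a b ⟨e, he, hh⟩ =>
      ⟨Sum.inr e, ⟨e, he, rfl⟩, by rw [ends_inr, hh]; exact Sym2.map_pair_eq _ _ _⟩) _ _ h

lemma proj₁ {T : Set (glue1 G H w u).E} {a b : (glue1 G H w u).V}
    (h : (glue1 G H w u).Reach T a b) :
    G.Reach (Sum.inl ⁻¹' T) (π₁ G H w u a) (π₁ G H w u b) := by
  induction h with
  | refl => exact .refl
  | @tail b c _ step ih =>
    obtain ⟨e, he, hh⟩ := step
    cases e with
    | inl f =>
      refine ih.tail ⟨f, he, ?_⟩
      have h2 := congrArg (Sym2.map (π₁ G H w u)) hh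
      rw [ends_inl, Sym2.map_map, Sym2.map_pair_eq] at h2
      have h3 : (π₁ G H w u) ∘ (ι G H w u) = id := funext π₁_ι
      rwa [h3, congrFun Sym2.map_id (G.ends f)] at h2
    | inr f =>
      rw [ends_inr] at hh
      have hb : b ∈ Sym2.map Sum.inr (H.ends f) := by rw [hh]; exact Sym2.mem_mk_left b c
      have hc : c ∈ Sym2.map Sum.inr (H.ends f) := by rw [hh]; exact Sym2.mem_mk_right b c
      obtain ⟨p, -, hp⟩ := Sym2.mem_map.mp hb
      obtain ⟨q, -, hq⟩ := Sym2.mem_map.mp hc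
      have : π₁ G H w u b = π₁ G H w u c := by rw [← hp, ← hq]; rfl
      exact this ▸ ih

lemma proj₂ {T : Set (glue1 G H w u).E} {a b : (glue1 G H w u).V}
    (h : (glue1 G H w u).Reach T a b) :
    H.Reach (Sum.inr ⁻¹' T) (π₂ G H w u a) (π₂ G H w u b) := by
  induction h with
  | refl => exact .refl
  | @tail b c _ step ih =>
    obtain ⟨e, he, hh⟩ := step
    cases e with
    | inr f =>
      refine ih.tail ⟨f, he, ?_⟩
      have h2 := congrArg (Sym2.map (π₂ G H w u)) hh
      erw [ends_inr, Sym2.map_map, Sym2.map_pair_eq] at h2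
      have h3 : (π₂ G H w u) ∘ (Sum.inr : H.V → (glue1 G H w u).V) = id := rfl
      rwa [h3, congrFun Sym2.map_id (H.ends f)] at h2
    | inl f =>
      rw [ends_inl] at hh
      have hb : b ∈ Sym2.map (ι G H w u) (G.ends f) := by rw [hh]; exact Sym2.mem_mk_left b c
      have hc : c ∈ Sym2.map (ι G H w u) (G.ends f) := by rw [hh]; exact Sym2.mem_mk_right b c
      obtain ⟨p, -, hp⟩ := Sym2.mem_map.mp hb
      obtain ⟨q, -, hq⟩ := Sym2.mem_map.mp hc
      have : π₂ G H w u b = π₂ G H w u c := by rw [← hp, ← hq, π₂_ι, π₂_ι]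
      exact this ▸ ih

variable (u₂ : H.V)

/-- The key correspondence. -/
lemma glue_iff (S : Finset (glue1 G H w u).E) :
    (glue1 G H w u).IsTwoForest (Sum.inr u) (Sum.inr u₂) S ↔
      G.IsSpanningTree (S.preimage Sum.inl Sum.inl_injective.injOn) ∧
      H.IsTwoForest u u₂ (S.preimage Sum.inr Sum.inr_injective.injOn) := by
  set T₁ := S.preimage Sum.inl Sum.inl_injective.injOn with hT₁
  set T₂ := S.preimage Sum.inr Sum.inr_injective.injOn with hT₂
  have cT₁ : (↑T₁ : Set G.E) = Sum.inl ⁻¹' (↑S : Set (glue1 G H w u).E) := by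
    rw [hT₁]; exact Finset.coe_preimage S _
  have cT₂ : (↑T₂ : Set H.E) = Sum.inr ⁻¹' (↑S : Set (glue1 G H w u).E) := by
    rw [hT₂]; exact Finset.coe_preimage S _
  have memT₁ : ∀ f : G.E, f ∈ T₁ ↔ Sum.inl f ∈ S := fun f => Finset.mem_preimage
  have memT₂ : ∀ f : H.E, f ∈ T₂ ↔ Sum.inr f ∈ S := fun f => Finset.mem_preimage
  constructor
  · rintro ⟨hF, hns, hsp⟩
    have reach_w : ∀ z : G.V, G.Reach ↑T₁ w z := by
      intro z
      rcases hsp (ι G H w u z) with h | h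
      · have := proj₁ h
        rwa [π₁_inr, π₁_ι, ← cT₁] at this
      · have := proj₁ h
        rwa [π₁_inr, π₁_ι, ← cT₁] at this
    refine ⟨⟨?_, ?_⟩, ?_, ?_, ?_⟩
    · -- T₁ forest
      intro e he x y hxy hreach
      have h1 : (glue1 G H w u).Reach (Sum.inl '' ((↑T₁ : Set G.E) \ {e}))
          (ι G H w u x) (ι G H w u y) := lift₁ hreach
      have h2 : Sum.inl '' ((↑T₁ : Set G.E) \ {e}) ⊆ (↑S : Set (glue1 G H w u).E) \ {Sum.inl e} := by
        rintro _ ⟨f, ⟨hf1, hf2⟩, rfl⟩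
        exact ⟨(memT₁ f).mp hf1, by simpa using hf2⟩
      exact hF (Sum.inl e) ((memT₁ e).mp he) _ _
        (by rw [ends_inl, hxy]; exact Sym2.map_pair_eq _ _ _) (reach_mono h2 h1)
    · -- T₁ spanning
      intro x y
      exact (reach_symm (reach_w x)).trans (reach_w y)
    · -- T₂ forest
      intro e he x y hxy hreach
      have h1 : (glue1 G H w u).Reach (Sum.inr '' ((↑T₂ : Set H.E) \ {e}))
          (Sum.inr x) (Sum.inr y) := lift₂ hreach
      have h2 : Sum.inr '' ((↑T₂ : Set H.E) \ {e}) ⊆ (↑S : Set (glue1 G H w u).E) \ {Sum.inr e} := by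
        rintro _ ⟨f, ⟨hf1, hf2⟩, rfl⟩
        exact ⟨(memT₂ f).mp hf1, by simpa using hf2⟩
      exact hF (Sum.inr e) ((memT₂ e).mp he) _ _
        (by rw [ends_inr, hxy]; exact Sym2.map_pair_eq _ _ _) (reach_mono h2 h1)
    · -- not reach u u₂
      intro h
      have h1 := lift₂ (G := G) (w := w) (u := u) h
      have h2 : Sum.inr '' (↑T₂ : Set H.E) ⊆ (↑S : Set (glue1 G H w u).E) := by
        rintro _ ⟨f, hf, rfl⟩; exact (memT₂ f).mp hf
      exact hns (reach_mono h2 h1)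
    · -- cover
      intro x
      rcases hsp (Sum.inr x) with h | h
      · left; have := proj₂ h; rwa [π₂_inr, π₂_inr, ← cT₂] at this
      · right; have := proj₂ h; rwa [π₂_inr, π₂_inr, ← cT₂] at this
  · rintro ⟨⟨hF₁, hsp₁⟩, hF₂, hns₂, hcov₂⟩
    have subT₁ : Sum.inl '' (↑T₁ : Set G.E) ⊆ (↑S : Set (glue1 G H w u).E) := by
      rintro _ ⟨f, hf, rfl⟩; exact (memT₁ f).mp hf
    have subT₂ : Sum.inr '' (↑T₂ : Set H.E) ⊆ (↑S : Set (glue1 G H w u).E) := by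
      rintro _ ⟨f, hf, rfl⟩; exact (memT₂ f).mp hf
    refine ⟨?_, ?_, ?_⟩
    · -- forest
      intro e he a b hab hreach
      cases e with
      | inl f =>
        obtain ⟨x, y, hxy⟩ := sym2_cases (G.ends f)
        rw [ends_inl, hxy, Sym2.map_pair_eq] at hab
        have hr : (glue1 G H w u).Reach ((↑S : Set (glue1 G H w u).E) \ {Sum.inl f})
            (ι G H w u x) (ι G H w u y) := by
          rcases Sym2.eq_iff.mp hab with ⟨ha, hb⟩ | ⟨ha, hb⟩
          · rwa [← ha, ← hb] at hreach
          · rw [← ha, ← hb] at hreach; exact reach_symm hreach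
        have hp := proj₁ hr
        rw [π₁_ι, π₁_ι] at hp
        have hset : Sum.inl ⁻¹' ((↑S : Set (glue1 G H w u).E) \ {Sum.inl f})
            = (↑T₁ : Set G.E) \ {f} := by
          ext g
          simp [cT₁, Set.mem_preimage, Set.mem_diff]
          exact and_congr_right' (not_congr Sum.inl_injective.eq_iff)
        erw [hset] at hp
        exact hF₁ f ((memT₁ f).mpr he) x y hxy hp
      | inr f =>
        obtain ⟨x, y, hxy⟩ := sym2_cases (H.ends f)
        rw [ends_inr, hxy, Sym2.map_pair_eq] at hab
        have hr : (glue1 G H w u).Reach ((↑S : Set (glue1 G H w u).E) \ {Sum.inr f})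
            (Sum.inr x) (Sum.inr y) := by
          rcases Sym2.eq_iff.mp hab with ⟨ha, hb⟩ | ⟨ha, hb⟩
          · rwa [← ha, ← hb] at hreach
          · rw [← ha, ← hb] at hreach; exact reach_symm hreach
        have hp := proj₂ hr
        rw [π₂_inr, π₂_inr] at hp
        have hset : Sum.inr ⁻¹' ((↑S : Set (glue1 G H w u).E) \ {Sum.inr f})
            = (↑T₂ : Set H.E) \ {f} := by
          ext g
          simp [cT₂, Set.mem_preimage, Set.mem_diff]
          exact and_congr_right' (not_congr Sum.inr_injective.eq_iff)
        erw [hset] at hp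
        exact hF₂ f ((memT₂ f).mpr he) x y hxy hp
    · -- not reach
      intro h
      have hp := proj₂ h
      rw [π₂_inr, π₂_inr, ← cT₂] at hp
      exact hns₂ hp
    · -- cover
      rintro (⟨x, hx⟩ | y)
      · left
        have h1 := lift₁ (H := H) (w := w) (u := u) (hsp₁ w x)
        rw [ι_w] at h1
        have h2 : ι G H w u x = Sum.inl ⟨x, hx⟩ := dif_neg hx
        rw [h2] at h1
        exact reach_mono subT₁ h1
      · rcases hcov₂ y with h | h
        · left; exact reach_mono subT₂ (lift₂ h)
        · right; exact reach_mono subT₂ (lift₂ h)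

end GlueAux

/-- If `L₁` is a connected finite graph with one distinguished vertex `w` and `L₂` is a
connected finite graph with two distinguished vertices `u₁ ≠ u₂`, then the number of
spanning 2-forests of the gluing of `L₁` and `L₂` along `w = u₁`, separating its two
distinguished vertices, equals `κ(L₁) · F₂(L₂)`. -/
theorem stmt_9 (L₁ L₂ : Multigraph) (w : L₁.V) (u₁ u₂ : L₂.V) (hu : u₁ ≠ u₂)
    (h₁ : L₁.Connected) (h₂ : L₂.Connected) :
    (glue1 L₁ L₂ w u₁).twoForestCount (Sum.inr u₁) (Sum.inr u₂) =
      L₁.treeCount * L₂.twoForestCount u₁ u₂ := by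
  classical
  have eqv : {S : Finset (glue1 L₁ L₂ w u₁).E //
        (glue1 L₁ L₂ w u₁).IsTwoForest (Sum.inr u₁) (Sum.inr u₂) S} ≃
      {T : Finset L₁.E // L₁.IsSpanningTree T} ×
      {T : Finset L₂.E // L₂.IsTwoForest u₁ u₂ T} := by
    refine
      { toFun := fun S =>
          (⟨S.1.preimage Sum.inl Sum.inl_injective.injOn,
              ((GlueAux.glue_iff u₂ S.1).mp S.2).1⟩,
           ⟨S.1.preimage Sum.inr Sum.inr_injective.injOn,
              ((GlueAux.glue_iff u₂ S.1).mp S.2).2⟩)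
        invFun := fun p =>
          ⟨(p.1.1.image (β := (glue1 L₁ L₂ w u₁).E) Sum.inl) ∪
              (p.2.1.image (β := (glue1 L₁ L₂ w u₁).E) Sum.inr), ?_⟩
        left_inv := ?_
        right_inv := ?_ }
    · refine (GlueAux.glue_iff u₂ _).mpr ⟨?_, ?_⟩
      · convert p.1.2 using 2
        ext f
        erw [Finset.mem_preimage, Finset.mem_union, Finset.mem_image, Finset.mem_image]
        constructor
        · rintro (⟨a, ha, h⟩ | ⟨a, ha, h⟩)
          · exact (Sum.inl_injective h) ▸ ha
          · exact absurd h (by simp)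
        · exact fun h => Or.inl ⟨f, h, rfl⟩
      · convert p.2.2 using 2
        ext f
        erw [Finset.mem_preimage, Finset.mem_union, Finset.mem_image, Finset.mem_image]
        constructor
        · rintro (⟨a, ha, h⟩ | ⟨a, ha, h⟩)
          · exact absurd h (by simp)
          · exact (Sum.inr_injective h) ▸ ha
        · exact fun h => Or.inr ⟨f, h, rfl⟩
    · rintro ⟨S, hS⟩
      ext e
      erw [Finset.mem_union, Finset.mem_image, Finset.mem_image]
      cases e with
      | inl f =>
        constructor
        · rintro (⟨a, ha, h⟩ | ⟨a, ha, h⟩)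
          · exact (Sum.inl_injective h) ▸ (Finset.mem_preimage (f := Sum.inl) (s := S) (hf := Sum.inl_injective.injOn)).mp ha
          · exact absurd h (by simp)
        · exact fun h => Or.inl ⟨f, (Finset.mem_preimage (f := Sum.inl) (s := S) (hf := Sum.inl_injective.injOn)).mpr h, rfl⟩
      | inr f =>
        constructor
        · rintro (⟨a, ha, h⟩ | ⟨a, ha, h⟩)
          · exact absurd h (by simp)
          · exact (Sum.inr_injective h) ▸ (Finset.mem_preimage (f := Sum.inr) (s := S) (hf := Sum.inr_injective.injOn)).mp ha
        · exact fun h => Or.inr ⟨f, (Finset.mem_preimage (f := Sum.inr) (s := S) (hf := Sum.inr_injective.injOn)).mpr h, rfl⟩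
    · rintro ⟨⟨T₁, h1⟩, ⟨T₂, h2⟩⟩
      refine Prod.ext (Subtype.ext ?_) (Subtype.ext ?_)
      · ext f
        erw [Finset.mem_preimage (β := (glue1 L₁ L₂ w u₁).E) (hf := Sum.inl_injective.injOn), Finset.mem_union, Finset.mem_image, Finset.mem_image]
        constructor
        · rintro (⟨a, ha, h⟩ | ⟨a, ha, h⟩)
          · exact (Sum.inl_injective h) ▸ ha
          · exact absurd h (by simp)
        · exact fun h => Or.inl ⟨f, h, rfl⟩
      · ext f
        erw [Finset.mem_preimage (β := (glue1 L₁ L₂ w u₁).E) (hf := Sum.inr_injective.injOn), Finset.mem_union, Finset.mem_image, Finset.mem_image]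
        constructor
        · rintro (⟨a, ha, h⟩ | ⟨a, ha, h⟩)
          · exact absurd h (by simp)
          · exact (Sum.inr_injective h) ▸ ha
        · exact fun h => Or.inr ⟨f, h, rfl⟩
  simp only [Multigraph.twoForestCount, Multigraph.treeCount]
  rw [Nat.card_congr eqv, Nat.card_prod]
end
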